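/- arXiv:1606.02802 — 7 statements merged into one kernel-verified Lean document; each statement's English description precedes it below -/
import Mathlib

section
/- Suppose there exists a strictly increasing sequence of positive integers (θ(n))_{n∈ℕ} such that Σ_{i=1}^m p_i(θ(n)) ≥ 1 for all n ∈ ℕ, and that lim_{n→∞} τ_i(n) = ∞ for each 1 ≤ i ≤ m. Then every solution of (E_R) oscillates. -/
lemma stmt_0_aux {m : ℕ} (p : Fin m → ℤ → ℝ) (τ : Fin m → ℤ → ℤ)
    (hp : ∀ i : Fin m, ∀ n : ℤ, 0 ≤ n → 0 ≤ p i n)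
    (hτ : ∀ i : Fin m, ∀ n : ℤ, 0 ≤ n → τ i n ≤ n - 1)
    (hτlim : ∀ i : Fin m, Filter.Tendsto (τ i) Filter.atTop Filter.atTop)
    (θ : ℕ → ℤ) (hθmono : StrictMono θ) (hθpos : ∀ n : ℕ, 0 < θ n)
    (hθsum : ∀ n : ℕ, 1 ≤ ∑ i : Fin m, p i (θ n))
    (x : ℤ → ℝ)
    (hxeq : ∀ n : ℤ, 0 ≤ n → x (n + 1) - x n + ∑ i : Fin m, p i n * x (τ i n) = 0) :
    ¬ ∃ N : ℤ, ∀ n ≥ N, 0 < x n := by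
  rintro ⟨N, hN⟩
  -- τ eventually ≥ N
  have hall : ∀ (M : ℤ), ∃ N1 : ℤ, ∀ n ≥ N1, ∀ i : Fin m, M ≤ τ i n := by
    intro M
    have h : ∀ᶠ n in Filter.atTop, ∀ i : Fin m, M ≤ τ i n :=
      Filter.eventually_all.2 fun i => (hτlim i).eventually_ge_atTop M
    exact Filter.eventually_atTop.1 h
  obtain ⟨N1, hN1⟩ := hall N
  set N2 : ℤ := max N (max N1 0) with hN2def
  have hN2N : N ≤ N2 := le_max_left _ _
  have hN2N1 : N1 ≤ N2 := le_trans (le_max_left _ _) (le_max_right _ _)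
  have hN20 : (0:ℤ) ≤ N2 := le_trans (le_max_right _ _) (le_max_right _ _)
  -- x is nonincreasing from N2 on
  have hstep : ∀ n : ℤ, N2 ≤ n → x (n + 1) ≤ x n := by
    intro n hn
    have h0 : (0:ℤ) ≤ n := le_trans hN20 hn
    have heq := hxeq n h0
    have hsum : 0 ≤ ∑ i : Fin m, p i n * x (τ i n) := by
      apply Finset.sum_nonneg
      intro i _
      exact mul_nonneg (hp i n h0) (le_of_lt (hN (τ i n) (hN1 n (le_trans hN2N1 hn) i)))
    linarith
  have hanti : ∀ a b : ℤ, N2 ≤ a → a ≤ b → x b ≤ x a := by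
    intro a b ha hab
    exact Int.le_induction (motive := fun b _ => x b ≤ x a) (le_refl _)
      (fun k hk ih => le_trans (hstep k (le_trans ha hk)) ih) b hab
  obtain ⟨N3, hN3⟩ := hall N2
  -- θ grows: θ 0 + k ≤ θ k
  have hθgrow : ∀ k : ℕ, θ 0 + k ≤ θ k := by
    intro k
    induction k with
    | zero => simp
    | succ j ih =>
      have := hθmono (show j < j + 1 by omega)
      push_cast
      push_cast at ih
      omega
  set k : ℕ := (max N3 N2 - θ 0).toNat with hkdef
  have h2 : (max N3 N2 - θ 0 : ℤ) ≤ (k : ℤ) := Int.self_le_toNat _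
  have hθk : max N3 N2 ≤ θ k := by have h1 := hθgrow k; omega
  set n : ℤ := θ k with hndef
  have hnN3 : N3 ≤ n := le_trans (le_max_left _ _) hθk
  have hnN2 : N2 ≤ n := le_trans (le_max_right _ _) hθk
  have hn0 : (0:ℤ) ≤ n := le_trans hN20 hnN2
  have heq := hxeq n hn0
  have hxpos : 0 < x n := hN n (le_trans hN2N hnN2)
  have hsum : x n * 1 ≤ ∑ i : Fin m, p i n * x (τ i n) := by
    calc x n * 1 ≤ x n * ∑ i : Fin m, p i n := by
          exact mul_le_mul_of_nonneg_left (hθsum k) (le_of_lt hxpos)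
      _ = ∑ i : Fin m, p i n * x n := by rw [Finset.mul_sum]; simp [mul_comm]
      _ ≤ ∑ i : Fin m, p i n * x (τ i n) := by
          apply Finset.sum_le_sum
          intro i _
          apply mul_le_mul_of_nonneg_left _ (hp i n hn0)
          have hτi : N2 ≤ τ i n := hN3 n hnN3 i
          have hτi2 : τ i n ≤ n := le_trans (hτ i n hn0) (by omega)
          exact hanti (τ i n) n hτi hτi2
  have hx1 : 0 < x (n + 1) := hN (n + 1) (by omega)
  linarith

/-- Theorem 2.3: if there is a (strictly increasing) subsequence `θ(n)` of positive
integers along which `∑_{i=1}^m p_i(θ(n)) ≥ 1`, and `τ_i(n) → ∞`, then every solution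
of the retarded equation `Δx(n) + ∑_i p_i(n) x(τ_i(n)) = 0` oscillates, i.e. it is
neither eventually positive nor eventually negative. -/
theorem stmt_0 {m : ℕ} (hm : 0 < m) (p : Fin m → ℤ → ℝ) (τ : Fin m → ℤ → ℤ)
    (hp : ∀ i : Fin m, ∀ n : ℤ, 0 ≤ n → 0 ≤ p i n)
    (hτ : ∀ i : Fin m, ∀ n : ℤ, 0 ≤ n → τ i n ≤ n - 1)
    (hτlim : ∀ i : Fin m, Filter.Tendsto (τ i) Filter.atTop Filter.atTop)
    (θ : ℕ → ℤ) (hθmono : StrictMono θ) (hθpos : ∀ n : ℕ, 0 < θ n)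
    (hθsum : ∀ n : ℕ, 1 ≤ ∑ i : Fin m, p i (θ n))
    (x : ℤ → ℝ)
    (hxeq : ∀ n : ℤ, 0 ≤ n → x (n + 1) - x n + ∑ i : Fin m, p i n * x (τ i n) = 0) :
    (¬ ∃ N : ℤ, ∀ n ≥ N, 0 < x n) ∧ (¬ ∃ N : ℤ, ∀ n ≥ N, x n < 0) := by
  constructor
  · exact stmt_0_aux p τ hp hτ hτlim θ hθmono hθpos hθsum x hxeq
  · rintro ⟨N, hN⟩
    apply stmt_0_aux p τ hp hτ hτlim θ hθmono hθpos hθsum (fun n => -x n)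
      (fun n hn => by
        have := hxeq n hn
        have hs : ∑ i : Fin m, p i n * (-x (τ i n)) = -∑ i : Fin m, p i n * x (τ i n) := by
          simp [mul_neg]
        linarith [hs])
    exact ⟨N, fun n hn => by simpa using hN n hn⟩
end

section
/- Assume lim_{n→∞} τ_i(n) = ∞ for each 1 ≤ i ≤ m, Σ_{i=1}^m p_i(n) < 1 for all n ≥ 0, and that for some r ∈ ℕ, limsup_{n→∞} Σ_{j=φ(n)}^{n} Σ_{i=1}^m p_i(j) a_r(φ(n), τ_i(j))^{−1} > 1. Then every solution of (E_R) oscillates. -/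
/-- `aR p τ r n k` is the quantity `a_{r+1}(n,k)` of the paper. -/
noncomputable def aR {m : ℕ} (p : Fin m → ℤ → ℝ) (τ : Fin m → ℤ → ℤ) : ℕ → ℤ → ℤ → ℝ
  | 0, n, k => ∏ i ∈ Finset.Ico k n, (1 - ∑ l : Fin m, p l i)
  | r + 1, n, k => ∏ i ∈ Finset.Ico k n, (1 - ∑ l : Fin m, p l i * (aR p τ r i (τ l i))⁻¹)

/-- `φ_i(n) = max_{0 ≤ s ≤ n} τ_i(s)` (for `n ≥ 0`). -/
noncomputable def phii {m : ℕ} (τ : Fin m → ℤ → ℤ) (i : Fin m) (n : ℤ) : ℤ :=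
  Finset.fold max (τ i 0) (τ i) (Finset.Icc 0 n)

/-- `φ(n) = max_{1 ≤ i ≤ m} φ_i(n)`. -/
noncomputable def phi {m : ℕ} [NeZero m] (τ : Fin m → ℤ → ℤ) (n : ℤ) : ℤ :=
  Finset.univ.sup' Finset.univ_nonempty (fun i => phii τ i n)

lemma Ico_insert_int (a b : ℤ) (h : a ≤ b) :
    Finset.Ico a (b + 1) = insert b (Finset.Ico a b) := by
  ext z; simp only [Finset.mem_Ico, Finset.mem_insert]; omega

lemma aR_self {m : ℕ} (p : Fin m → ℤ → ℝ) (τ : Fin m → ℤ → ℤ) (r : ℕ) (k : ℤ) :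
    aR p τ r k k = 1 := by
  cases r <;> simp [aR]

lemma aR_zero_succ {m : ℕ} (p : Fin m → ℤ → ℝ) (τ : Fin m → ℤ → ℤ) {k n : ℤ} (h : k ≤ n) :
    aR p τ 0 (n + 1) k = aR p τ 0 n k * (1 - ∑ l : Fin m, p l n) := by
  simp only [aR]
  rw [Ico_insert_int _ _ h, Finset.prod_insert (by simp), mul_comm]

lemma aR_succ_succ {m : ℕ} (p : Fin m → ℤ → ℝ) (τ : Fin m → ℤ → ℤ) (r : ℕ) {k n : ℤ}
    (h : k ≤ n) :
    aR p τ (r + 1) (n + 1) k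
      = aR p τ (r + 1) n k * (1 - ∑ l : Fin m, p l n * (aR p τ r n (τ l n))⁻¹) := by
  simp only [aR]
  rw [Ico_insert_int _ _ h, Finset.prod_insert (by simp), mul_comm]

lemma tel (x : ℤ → ℝ) (a : ℤ) : ∀ b : ℤ, a ≤ b →
    ∑ j ∈ Finset.Icc a b, (x (j + 1) - x j) = x (b + 1) - x a := by
  refine Int.le_induction ?_ ?_
  · simp
  · intro n hn ih
    have h : Finset.Icc a (n + 1) = insert (n + 1) (Finset.Icc a n) := by
      ext z; simp only [Finset.mem_Icc, Finset.mem_insert]; omega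
    rw [h, Finset.sum_insert (by simp), ih]; ring

lemma key {m : ℕ} [NeZero m] (p : Fin m → ℤ → ℝ) (τ : Fin m → ℤ → ℤ)
    (hp : ∀ i : Fin m, ∀ n : ℤ, 0 ≤ n → 0 ≤ p i n)
    (hτ : ∀ i : Fin m, ∀ n : ℤ, 0 ≤ n → τ i n ≤ n - 1)
    (hτlim : ∀ i : Fin m, Filter.Tendsto (τ i) Filter.atTop Filter.atTop)
    (hsum : ∀ n : ℤ, 0 ≤ n → ∑ i : Fin m, p i n < 1)
    (r : ℕ)
    (hcond : 1 < Filter.limsup (fun n : ℤ =>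
        ∑ j ∈ Finset.Icc (phi τ n) n, ∑ i : Fin m, p i j * (aR p τ r (phi τ n) (τ i j))⁻¹)
      Filter.atTop)
    (x : ℤ → ℝ)
    (hxeq : ∀ n : ℤ, 0 ≤ n → x (n + 1) - x n + ∑ i : Fin m, p i n * x (τ i n) = 0) :
    ¬ ∃ N : ℤ, ∀ n ≥ N, 0 < x n := by
  rintro ⟨N₀', hN₀'⟩
  set N₀ : ℤ := max N₀' 0 with hN₀def
  have hN₀0 : (0:ℤ) ≤ N₀ := le_max_right _ _
  have hpos : ∀ n : ℤ, N₀ ≤ n → 0 < x n :=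
    fun n hn => hN₀' n ((le_max_left _ _).trans hn)
  -- τ gets eventually large, uniformly in i
  have hbig : ∀ C : ℤ, ∃ M : ℤ, 0 ≤ M ∧ ∀ n : ℤ, M ≤ n → ∀ i : Fin m, C ≤ τ i n := by
    intro C
    have hev : ∀ᶠ n in Filter.atTop, ∀ i : Fin m, C ≤ τ i n :=
      Filter.eventually_all.mpr fun i => (hτlim i).eventually_ge_atTop C
    obtain ⟨M, hM⟩ := Filter.eventually_atTop.mp hev
    exact ⟨max M 0, le_max_right _ _, fun n hn i => hM n ((le_max_left _ _).trans hn) i⟩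
  -- a threshold beyond which all delayed values are in the positivity region
  obtain ⟨M₁', hM₁'0, hM₁'⟩ := hbig N₀
  set M₁ : ℤ := max M₁' N₀ with hM₁def
  have hM₁N₀ : N₀ ≤ M₁ := le_max_right _ _
  have hM₁0 : (0:ℤ) ≤ M₁ := hN₀0.trans hM₁N₀
  have hM₁τ : ∀ n : ℤ, M₁ ≤ n → ∀ i : Fin m, N₀ ≤ τ i n :=
    fun n hn i => hM₁' n ((le_max_left _ _).trans hn) i
  -- x is nonincreasing on [M₁, ∞)
  have hmono : ∀ a : ℤ, M₁ ≤ a → ∀ b : ℤ, a ≤ b → x b ≤ x a := by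
    intro a ha
    refine Int.le_induction ?_ ?_
    · exact le_refl _
    · intro n hn ih
      have hna : M₁ ≤ n := ha.trans hn
      have h0n : (0:ℤ) ≤ n := hM₁0.trans hna
      have heq := hxeq n h0n
      have hnn : 0 ≤ ∑ i : Fin m, p i n * x (τ i n) :=
        Finset.sum_nonneg fun i _ =>
          mul_nonneg (hp i n h0n) (le_of_lt (hpos _ (hM₁τ n hna i)))
      linarith
  -- Lemma A
  have lemA : ∀ r' : ℕ, ∃ M : ℤ, M₁ ≤ M ∧ ∀ k : ℤ, M ≤ k → ∀ n : ℤ, k ≤ n →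
      0 < aR p τ r' n k ∧ x n ≤ x k * aR p τ r' n k := by
    intro r'
    induction r' with
    | zero =>
      obtain ⟨M', _, hM'⟩ := hbig M₁
      refine ⟨max M' M₁, le_max_right _ _, ?_⟩
      intro k hk
      have hkM₁ : M₁ ≤ k := (le_max_right M' M₁).trans hk
      have hkM' : M' ≤ k := (le_max_left M' M₁).trans hk
      refine Int.le_induction ?_ ?_
      · rw [aR_self]; exact ⟨one_pos, by simp⟩
      · intro n hn ih
        obtain ⟨hapos, hle⟩ := ih
        have h0n : (0:ℤ) ≤ n := hM₁0.trans (hkM₁.trans hn)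
        have hc : 0 < 1 - ∑ l : Fin m, p l n := by linarith [hsum n h0n]
        have hstep : x (n + 1) ≤ x n * (1 - ∑ l : Fin m, p l n) := by
          have heq := hxeq n h0n
          have hterm : (∑ l : Fin m, p l n) * x n ≤ ∑ l : Fin m, p l n * x (τ l n) := by
            rw [Finset.sum_mul]
            refine Finset.sum_le_sum fun l _ => ?_
            refine mul_le_mul_of_nonneg_left ?_ (hp l n h0n)
            exact hmono (τ l n) (hM' n (hkM'.trans hn) l) n
              (by linarith [hτ l n h0n])
          have hexp : x n * (1 - ∑ l : Fin m, p l n)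
              = x n - (∑ l : Fin m, p l n) * x n := by ring
          rw [hexp]; linarith
        rw [aR_zero_succ p τ hn]
        refine ⟨mul_pos hapos hc, ?_⟩
        calc x (n + 1) ≤ x n * (1 - ∑ l : Fin m, p l n) := hstep
          _ ≤ (x k * aR p τ 0 n k) * (1 - ∑ l : Fin m, p l n) :=
            mul_le_mul_of_nonneg_right hle hc.le
          _ = x k * (aR p τ 0 n k * (1 - ∑ l : Fin m, p l n)) := by ring
    | succ r' ihr =>
      obtain ⟨Mr, hMrM₁, hMr⟩ := ihr
      obtain ⟨M', _, hM'⟩ := hbig Mr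
      refine ⟨max M' Mr, hMrM₁.trans (le_max_right _ _), ?_⟩
      intro k hk
      have hkMr : Mr ≤ k := (le_max_right M' Mr).trans hk
      have hkM₁ : M₁ ≤ k := hMrM₁.trans hkMr
      have hkM' : M' ≤ k := (le_max_left M' Mr).trans hk
      refine Int.le_induction ?_ ?_
      · rw [aR_self]; exact ⟨one_pos, by simp⟩
      · intro n hn ih
        obtain ⟨hapos, hle⟩ := ih
        have h0n : (0:ℤ) ≤ n := hM₁0.trans (hkM₁.trans hn)
        set c : ℝ := 1 - ∑ l : Fin m, p l n * (aR p τ r' n (τ l n))⁻¹ with hcdef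
        have hstep : x (n + 1) ≤ x n * c := by
          have heq := hxeq n h0n
          have hterm : ∀ l : Fin m,
              p l n * (x n * (aR p τ r' n (τ l n))⁻¹) ≤ p l n * x (τ l n) := by
            intro l
            obtain ⟨ha, hx⟩ := hMr (τ l n) (hM' n (hkM'.trans hn) l) n
              (by linarith [hτ l n h0n])
            refine mul_le_mul_of_nonneg_left ?_ (hp l n h0n)
            rw [mul_inv_le_iff₀ ha]
            linarith [hx]
          have hsums : ∑ l : Fin m, p l n * (x n * (aR p τ r' n (τ l n))⁻¹)
              ≤ ∑ l : Fin m, p l n * x (τ l n) :=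
            Finset.sum_le_sum fun l _ => hterm l
          have hexp : x n * c
              = x n - ∑ l : Fin m, p l n * (x n * (aR p τ r' n (τ l n))⁻¹) := by
            rw [hcdef, mul_sub, mul_one, Finset.mul_sum]
            congr 1
            refine Finset.sum_congr rfl fun l _ => ?_
            ring
          rw [hexp]; linarith
        have hxn1 : 0 < x (n + 1) := hpos _ (by linarith [hM₁N₀, hkM₁, hn])
        have hxn : 0 < x n := hpos _ ((hM₁N₀.trans hkM₁).trans hn)
        have hc : 0 < c := by nlinarith
        rw [aR_succ_succ p τ r' hn]
        refine ⟨mul_pos hapos hc, ?_⟩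
        calc x (n + 1) ≤ x n * c := hstep
          _ ≤ (x k * aR p τ (r' + 1) n k) * c := mul_le_mul_of_nonneg_right hle hc.le
          _ = x k * (aR p τ (r' + 1) n k * c) := by ring
  -- final contradiction
  obtain ⟨Mr, hMrM₁, hMr⟩ := lemA r
  obtain ⟨M'', hM''0, hM''big⟩ := hbig Mr
  obtain ⟨M₃, hM₃0, hM₃big⟩ := hbig M''
  set S : ℤ → ℝ := fun n =>
    ∑ j ∈ Finset.Icc (phi τ n) n, ∑ i : Fin m, p i j * (aR p τ r (phi τ n) (τ i j))⁻¹
    with hSdef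
  have hfreq : ∃ n : ℤ, M₃ ≤ n ∧ 1 < S n := by
    by_contra hcon
    push_neg at hcon
    have hev : ∀ᶠ n in Filter.atTop, S n ≤ 1 :=
      Filter.eventually_atTop.mpr ⟨M₃, fun n hn => (hcon n hn)⟩
    have hle1 : Filter.limsup S Filter.atTop ≤ 1 := by
      rw [Filter.limsup_eq]
      by_cases hb : BddBelow {a : ℝ | ∀ᶠ n in Filter.atTop, S n ≤ a}
      · exact csInf_le hb hev
      · rw [Real.sInf_of_not_bddBelow hb]; norm_num
    rw [hSdef] at hle1
    exact absurd hcond (not_lt.mpr hle1)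
  obtain ⟨n, hnM₃, hSn⟩ := hfreq
  set g : ℤ := phi τ n with hgdef
  have hn0 : (0:ℤ) ≤ n := hM₃0.trans hnM₃
  have i0 : Fin m := ⟨0, Nat.pos_of_ne_zero (NeZero.ne m)⟩
  have hgM'' : M'' ≤ g := by
    have h1 : M'' ≤ τ i0 M₃ := hM₃big M₃ le_rfl i0
    have h2 : τ i0 M₃ ≤ phii τ i0 n := by
      rw [phii, Finset.le_fold_max]
      exact Or.inr ⟨M₃, Finset.mem_Icc.mpr ⟨hM₃0, hnM₃⟩, le_rfl⟩
    exact h1.trans (h2.trans (Finset.le_sup' (fun i => phii τ i n) (Finset.mem_univ i0)))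
  have hg0 : (0:ℤ) ≤ g := hM''0.trans hgM''
  have hgn : g ≤ n := by
    refine Finset.sup'_le _ _ fun i _ => ?_
    rw [phii, Finset.fold_max_le]
    constructor
    · linarith [hτ i 0 le_rfl]
    · intro s hs
      obtain ⟨hs0, hsn⟩ := Finset.mem_Icc.mp hs
      linarith [hτ i s hs0]
  have hτle : ∀ j : ℤ, j ∈ Finset.Icc g n → ∀ i : Fin m, τ i j ≤ g := by
    intro j hj i
    obtain ⟨hj1, hj2⟩ := Finset.mem_Icc.mp hj
    have : τ i j ≤ phii τ i n := by
      rw [phii, Finset.le_fold_max]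
      exact Or.inr ⟨j, Finset.mem_Icc.mpr ⟨hg0.trans hj1, hj2⟩, le_rfl⟩
    exact this.trans (Finset.le_sup' (fun i => phii τ i n) (Finset.mem_univ i))
  have hτge : ∀ j : ℤ, j ∈ Finset.Icc g n → ∀ i : Fin m, Mr ≤ τ i j := by
    intro j hj i
    exact hM''big j (hgM''.trans (Finset.mem_Icc.mp hj).1) i
  have hgMr : Mr ≤ g :=
    (hτge g (Finset.mem_Icc.mpr ⟨le_rfl, hgn⟩) i0).trans
      (hτle g (Finset.mem_Icc.mpr ⟨le_rfl, hgn⟩) i0)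
  have hxg : 0 < x g := hpos g ((hM₁N₀.trans hMrM₁).trans hgMr)
  have hxn1 : 0 < x (n + 1) := hpos _ (by linarith [hM₁N₀.trans hMrM₁, hgMr, hgn])
  -- the crucial lower bound
  have hkey : ∀ j ∈ Finset.Icc g n,
      x g * (∑ i : Fin m, p i j * (aR p τ r g (τ i j))⁻¹)
        ≤ ∑ i : Fin m, p i j * x (τ i j) := by
    intro j hj
    have hj0 : (0:ℤ) ≤ j := hg0.trans (Finset.mem_Icc.mp hj).1
    rw [Finset.mul_sum]
    refine Finset.sum_le_sum fun i _ => ?_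
    obtain ⟨ha, hx⟩ := hMr (τ i j) (hτge j hj i) g (hτle j hj i)
    have h1 : x g * (aR p τ r g (τ i j))⁻¹ ≤ x (τ i j) := by
      rw [mul_inv_le_iff₀ ha]; linarith
    calc x g * (p i j * (aR p τ r g (τ i j))⁻¹)
        = p i j * (x g * (aR p τ r g (τ i j))⁻¹) := by ring
      _ ≤ p i j * x (τ i j) := mul_le_mul_of_nonneg_left h1 (hp i j hj0)
  have hT : x g * S n ≤ ∑ j ∈ Finset.Icc g n, ∑ i : Fin m, p i j * x (τ i j) := by
    have hS : S n = ∑ j ∈ Finset.Icc g n, ∑ i : Fin m, p i j * (aR p τ r g (τ i j))⁻¹ := by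
      simp only [hSdef, ← hgdef]
    rw [hS, Finset.mul_sum]
    exact Finset.sum_le_sum hkey
  have htel := tel x g n hgn
  have hsum_eq : x (n + 1) - x g
      + ∑ j ∈ Finset.Icc g n, ∑ i : Fin m, p i j * x (τ i j) = 0 := by
    have heach : ∀ j ∈ Finset.Icc g n,
        x (j + 1) - x j = -∑ i : Fin m, p i j * x (τ i j) := by
      intro j hj
      have hj0 : (0:ℤ) ≤ j := hg0.trans (Finset.mem_Icc.mp hj).1
      have := hxeq j hj0
      linarith
    have : ∑ j ∈ Finset.Icc g n, (x (j + 1) - x j)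
        = -∑ j ∈ Finset.Icc g n, ∑ i : Fin m, p i j * x (τ i j) := by
      rw [← Finset.sum_neg_distrib]
      exact Finset.sum_congr rfl heach
    rw [htel] at this
    linarith
  have hlast : x g < x g * S n := by nlinarith
  linarith

/-- Theorem 2.4: if `τ_i(n) → ∞`, `∑_i p_i(n) < 1` for all `n ≥ 0`, and for some `r ∈ ℕ`
`limsup_{n→∞} ∑_{j=φ(n)}^{n} ∑_{i=1}^m p_i(j) a_r(φ(n), τ_i(j))⁻¹ > 1`,
then every solution of the retarded equation oscillates. -/
theorem stmt_2 {m : ℕ} [NeZero m] (p : Fin m → ℤ → ℝ) (τ : Fin m → ℤ → ℤ)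
    (hp : ∀ i : Fin m, ∀ n : ℤ, 0 ≤ n → 0 ≤ p i n)
    (hτ : ∀ i : Fin m, ∀ n : ℤ, 0 ≤ n → τ i n ≤ n - 1)
    (hτlim : ∀ i : Fin m, Filter.Tendsto (τ i) Filter.atTop Filter.atTop)
    (hsum : ∀ n : ℤ, 0 ≤ n → ∑ i : Fin m, p i n < 1)
    (r : ℕ)
    (hcond : 1 < Filter.limsup (fun n : ℤ =>
        ∑ j ∈ Finset.Icc (phi τ n) n, ∑ i : Fin m, p i j * (aR p τ r (phi τ n) (τ i j))⁻¹)
      Filter.atTop)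
    (x : ℤ → ℝ)
    (hxeq : ∀ n : ℤ, 0 ≤ n → x (n + 1) - x n + ∑ i : Fin m, p i n * x (τ i n) = 0) :
    (¬ ∃ N : ℤ, ∀ n ≥ N, 0 < x n) ∧ (¬ ∃ N : ℤ, ∀ n ≥ N, x n < 0) := by
  constructor
  · exact key p τ hp hτ hτlim hsum r hcond x hxeq
  · rintro ⟨N, hN⟩
    refine key p τ hp hτ hτlim hsum r hcond (fun n => -x n) ?_ ⟨N, fun n hn => ?_⟩
    · intro n hn
      have h := hxeq n hn
      have h2 : ∑ i : Fin m, p i n * (-x (τ i n)) = -∑ i : Fin m, p i n * x (τ i n) := by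
        rw [← Finset.sum_neg_distrib]
        exact Finset.sum_congr rfl fun i _ => by ring
      simp only [h2]
      linarith
    · simpa using hN n hn
end

section
/- Assume lim_{n→∞} τ_i(n) = ∞ for each 1 ≤ i ≤ m, and let (x(n)) be an eventually positive solution of (E_R). Set α_i = liminf_{n→∞} Σ_{j=φ_i(n)}^{n−1} p_i(j) and α = min_{1≤i≤m} α_i. If 0 < α ≤ −1 + √2, then liminf_{n→∞} x(n+1)/x(φ(n)) ≥ (1 − α − √(1 − 2α − α²))/2. -/
open Filter Finset

private lemma ev_anti (x : ℤ → ℝ) (R : ℤ) (hst : ∀ j, R ≤ j → x (j+1) ≤ x j) :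
    ∀ a b : ℤ, R ≤ a → a ≤ b → x b ≤ x a := by
  intro a
  refine fun b ha hab => Int.le_induction (motive := fun b _ => x b ≤ x a) le_rfl ?_ b hab
  intro n hn ih
  exact le_trans (hst n (ha.trans hn)) ih

private lemma sum_steps (x : ℤ → ℝ) (g : ℤ → ℝ) (R : ℤ)
    (hst : ∀ j, R ≤ j → x (j+1) + g j ≤ x j) :
    ∀ a b : ℤ, R ≤ a → a - 1 ≤ b → x (b+1) + ∑ j ∈ Finset.Icc a b, g j ≤ x a := by
  intro a b ha hab
  refine Int.le_induction (motive := fun b _ => x (b+1) + ∑ j ∈ Finset.Icc a b, g j ≤ x a) ?_ ?_ b hab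
  · show x (a - 1 + 1) + ∑ j ∈ Finset.Icc a (a-1), g j ≤ x a
    have h1 : Finset.Icc a (a-1) = ∅ := Finset.Icc_eq_empty (by omega)
    have h2 : a - 1 + 1 = a := by ring
    rw [h1, Finset.sum_empty, h2, add_zero]
  · intro b hb ih
    have hIcc : Finset.Icc a (b+1) = insert (b+1) (Finset.Icc a b) := by
      ext k; simp only [Finset.mem_Icc, Finset.mem_insert]; omega
    have hnotmem : (b+1) ∉ Finset.Icc a b := by simp
    rw [hIcc, Finset.sum_insert hnotmem]
    have hstep := hst (b+1) (by omega)
    linarith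

private lemma sum_Ico_split (f : ℤ → ℝ) (a b c : ℤ) (h1 : a ≤ b) (h2 : b ≤ c) :
    ∑ i ∈ Ico a b, f i + ∑ i ∈ Ico b c, f i = ∑ i ∈ Ico a c, f i := by
  rw [← Finset.sum_union]
  · rw [Finset.Ico_union_Ico_eq_Ico h1 h2]
  · exact Finset.Ico_disjoint_Ico_consecutive a b c

private lemma sum_Ico_top (f : ℤ → ℝ) (a b : ℤ) (h : a ≤ b) :
    ∑ i ∈ Ico a (b+1), f i = ∑ i ∈ Ico a b, f i + f b := by
  have : (Finset.Ico a (b+1) : Finset ℤ) = insert b (Finset.Ico a b) := by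
    rw [Finset.Ico_insert_right h]; rfl
  rw [this, Finset.sum_insert (by simp), add_comm]

private lemma core (p : ℤ → ℝ) (h τ : ℤ → ℤ) (x : ℤ → ℝ) (A : ℝ)
    (hA0 : 0 < A)
    (hp : ∀ n : ℤ, 0 ≤ n → 0 ≤ p n)
    (hτh : ∀ n : ℤ, 0 ≤ n → τ n ≤ h n)
    (hh1 : ∀ n : ℤ, 0 ≤ n → h n ≤ n - 1)
    (hhmono : Monotone h)
    (hhtop : Filter.Tendsto h Filter.atTop Filter.atTop)
    (hτtop : Filter.Tendsto τ Filter.atTop Filter.atTop)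
    (hxpos : ∀ᶠ j in Filter.atTop, 0 < x j)
    (hstep : ∀ᶠ j in Filter.atTop, x (j+1) + p j * x (τ j) ≤ x j)
    (hwin : ∀ᶠ n in Filter.atTop, A < ∑ j ∈ Finset.Ico (h n) n, p j) :
    ∀ D : ℝ, 0 ≤ D → (∀ᶠ j in Filter.atTop, D * x (h j) ≤ x (j+1)) →
      0 < 1 - A - D ∧ ∀ᶠ n in Filter.atTop, (A^2/2) / (1 - A - D) ≤ x (n+1) / x (h n) := by
  obtain ⟨R0, hR0⟩ := eventually_atTop.1 hxpos
  obtain ⟨R1', hR1'⟩ := eventually_atTop.1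
    (hstep.and ((hτtop.eventually_ge_atTop R0).and (eventually_ge_atTop (0:ℤ))))
  set R1 : ℤ := max (max R1' R0) 0 with hR1def
  have hR1_0 : (0:ℤ) ≤ R1 := le_max_right _ _
  have hstepR : ∀ j, R1 ≤ j → x (j+1) + p j * x (τ j) ≤ x j :=
    fun j hj => (hR1' j (le_trans (le_trans (le_max_left _ _) (le_max_left _ _)) hj)).1
  have hτR0 : ∀ j, R1 ≤ j → R0 ≤ τ j :=
    fun j hj => (hR1' j (le_trans (le_trans (le_max_left _ _) (le_max_left _ _)) hj)).2.1
  have hposR : ∀ j, R1 ≤ j → 0 < x j :=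
    fun j hj => hR0 j (le_trans (le_trans (le_max_right _ _) (le_max_left _ _)) hj)
  -- the product terms are nonnegative on [R1, ∞)
  have hterm : ∀ j, R1 ≤ j → 0 ≤ p j * x (τ j) := fun j hj =>
    mul_nonneg (hp j (le_trans hR1_0 hj)) (le_of_lt (hR0 _ (hτR0 j hj)))
  -- anti-monotonicity
  have hanti : ∀ a b : ℤ, R1 ≤ a → a ≤ b → x b ≤ x a := by
    refine ev_anti x R1 (fun j hj => ?_)
    have := hstepR j hj
    have := hterm j hj
    linarith
  have hsum : ∀ a b : ℤ, R1 ≤ a → a - 1 ≤ b →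
      x (b+1) + ∑ j ∈ Finset.Icc a b, p j * x (τ j) ≤ x a :=
    sum_steps x _ R1 hstepR
  obtain ⟨R2', hR2'⟩ := eventually_atTop.1 (hwin.and (hτtop.eventually_ge_atTop R1))
  set R2 : ℤ := max R2' R1 with hR2def
  have hR2R1 : R1 ≤ R2 := le_max_right _ _
  have hwinR : ∀ j, R2 ≤ j → A < ∑ s ∈ Finset.Ico (h j) j, p s :=
    fun j hj => (hR2' j (le_trans (le_max_left _ _) hj)).1
  have hτR1 : ∀ j, R2 ≤ j → R1 ≤ τ j :=
    fun j hj => (hR2' j (le_trans (le_max_left _ _) hj)).2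
  intro D hD0 hDev
  obtain ⟨R3', hR3'⟩ := eventually_atTop.1 hDev
  set R3 : ℤ := max R3' R2 with hR3def
  have hR3R2 : R2 ≤ R3 := le_max_right _ _
  have hDR : ∀ j, R3 ≤ j → D * x (h j) ≤ x (j+1) :=
    fun j hj => hR3' j (le_trans (le_max_left _ _) hj)
  obtain ⟨N', hN'⟩ := eventually_atTop.1 (hhtop.eventually_ge_atTop R2)
  set N : ℤ := max N' R3 with hNdef
  have hNR3 : R3 ≤ N := le_max_right _ _
  have hhN : ∀ n, N ≤ n → R2 ≤ h n :=
    fun n hn => hN' n (le_trans (le_max_left _ _) hn)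
  -- the main pointwise estimate
  have main : ∀ n, N ≤ n → ∃ P : ℝ, A < P ∧
      x (h n) * (A^2/2) ≤ x (n+1) * (1 - D - P) := by
    intro n hn
    have hnR3 : R3 ≤ n := le_trans hNR3 hn
    have hnR2 : R2 ≤ n := le_trans hR3R2 hnR3
    have hnR1 : R1 ≤ n := le_trans hR2R1 hnR2
    have hn0 : (0:ℤ) ≤ n := le_trans hR1_0 hnR1
    have hhnR2 : R2 ≤ h n := hhN n hn
    have hhnR1 : R1 ≤ h n := le_trans hR2R1 hhnR2
    have hhn0 : (0:ℤ) ≤ h n := le_trans hR1_0 hhnR1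
    -- the least M > n with h M ≥ n + 1
    obtain ⟨M, ⟨hMn, hhM⟩, hMmin⟩ :=
      Int.exists_least_of_bdd (P := fun z => n < z ∧ n + 1 ≤ h z)
        ⟨n+1, fun z hz => hz.1⟩
        (by
          obtain ⟨z, hz1, hz2⟩ := ((hhtop.eventually_ge_atTop (n+1)).and
            (eventually_gt_atTop n)).exists
          exact ⟨z, hz2, hz1⟩)
    have hM2 : n + 2 ≤ M := by
      rcases lt_or_ge (n+1) M with h' | h'
      · omega
      · exfalso
        have hMeq : M = n + 1 := le_antisymm h' hMn
        have := hh1 (n+1) (by omega)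
        rw [hMeq] at hhM; omega
    have hmid : ∀ j, n < j → j < M → h j ≤ n := by
      intro j h1 h2
      by_contra hc
      exact absurd (hMmin j ⟨h1, by omega⟩) (by omega)
    -- partial sums of p after n
    set Q : ℤ → ℝ := fun j => ∑ s ∈ Finset.Ico (n+1) j, p s with hQdef
    -- backward estimate
    have KB : ∀ j, n+1 ≤ j → j ≤ M - 1 →
        x (n+1) + x (h n) * max 0 (A - Q j) ≤ x (τ j) := by
      intro j hj1 hj2
      have hj0 : (0:ℤ) ≤ j := by omega
      have hjR2 : R2 ≤ j := by omega
      have hhj_le : h j ≤ n := hmid j (by omega) (by omega)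
      have hhj_ge : h n ≤ h j := hhmono (by omega : n ≤ j)
      have hhjR1 : R1 ≤ h j := le_trans hhnR1 hhj_ge
      -- each term in the backward sum is at least x (h n) * p s
      have hterm2 : ∀ s ∈ Finset.Icc (h j) n, x (h n) * p s ≤ p s * x (τ s) := by
        intro s hs
        rw [Finset.mem_Icc] at hs
        have hsR2 : R2 ≤ s := le_trans hhnR2 (le_trans hhj_ge hs.1)
        have hs0 : (0:ℤ) ≤ s := le_trans (le_trans hR1_0 (le_trans hR2R1 hhnR2)) (le_trans hhj_ge hs.1)
        have hτs : τ s ≤ h n := le_trans (hτh s hs0) (hhmono hs.2)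
        have hxτs : x (h n) ≤ x (τ s) := hanti (τ s) (h n) (hτR1 s hsR2) hτs
        rw [mul_comm]
        exact mul_le_mul_of_nonneg_left hxτs (hp s hs0)
      have hBsum := hsum (h j) n hhjR1 (by omega)
      have hge : (∑ s ∈ Finset.Icc (h j) n, p s) * x (h n)
          ≤ ∑ s ∈ Finset.Icc (h j) n, p s * x (τ s) := by
        rw [Finset.sum_mul]
        refine Finset.sum_le_sum (fun s hs => ?_)
        rw [mul_comm]
        exact hterm2 s hs
      -- the sum of p over Icc (h j) n is ≥ max 0 (A - Q j)
      have hpsum : max 0 (A - Q j) ≤ ∑ s ∈ Finset.Icc (h j) n, p s := by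
        have hIccIco : Finset.Icc (h j) n = Finset.Ico (h j) (n+1) := rfl
        have hsplit := sum_Ico_split p (h j) (n+1) j (by omega) (by omega)
        have hwinj := hwinR j hjR2
        refine max_le ?_ ?_
        · refine Finset.sum_nonneg (fun s hs => ?_)
          rw [Finset.mem_Icc] at hs
          exact hp s (le_trans hhn0 (le_trans hhj_ge hs.1))
        · rw [hIccIco]; rw [hQdef]
          simp only []
          linarith [hsplit, hwinj]
      have hτjR1 : R1 ≤ τ j := hτR1 j hjR2
      have hτjhj : τ j ≤ h j := hτh j hj0
      have hxhj : x (h j) ≤ x (τ j) := hanti (τ j) (h j) hτjR1 hτjhj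
      have hxhn0 : 0 < x (h n) := hposR (h n) hhnR1
      have : x (h n) * max 0 (A - Q j) ≤ ∑ s ∈ Finset.Icc (h j) n, p s * x (τ s) := by
        calc x (h n) * max 0 (A - Q j) ≤ x (h n) * ∑ s ∈ Finset.Icc (h j) n, p s :=
              mul_le_mul_of_nonneg_left hpsum (le_of_lt hxhn0)
          _ = (∑ s ∈ Finset.Icc (h j) n, p s) * x (h n) := mul_comm _ _
          _ ≤ _ := hge
      linarith
    -- forward estimate
    have hF := hsum (n+1) (M-1) (by omega) (by omega)
    have hMrw : M - 1 + 1 = M := by ring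
    rw [hMrw] at hF
    -- x M ≥ D x(n+1)
    have hxM : D * x (n+1) ≤ x M := by
      have h1 : D * x (h (M-1)) ≤ x (M-1+1) := hDR (M-1) (by omega)
      rw [hMrw] at h1
      have h2 : h (M-1) ≤ n := hmid (M-1) (by omega) (by omega)
      have h3 : R1 ≤ h (M-1) := le_trans hhnR1 (hhmono (by omega : n ≤ M - 1))
      have h4 : x (n+1) ≤ x (h (M-1)) := hanti (h (M-1)) (n+1) h3 (by omega)
      exact le_trans (mul_le_mul_of_nonneg_left h4 hD0) h1
    set P : ℝ := ∑ j ∈ Finset.Icc (n+1) (M-1), p j with hPdef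
    set S : ℝ := ∑ j ∈ Finset.Icc (n+1) (M-1), p j * max 0 (A - Q j) with hSdef
    -- bound the forward sum from below
    have hFsum : P * x (n+1) + x (h n) * S ≤
        ∑ j ∈ Finset.Icc (n+1) (M-1), p j * x (τ j) := by
      have : ∀ j ∈ Finset.Icc (n+1) (M-1),
          p j * x (n+1) + x (h n) * (p j * max 0 (A - Q j)) ≤ p j * x (τ j) := by
        intro j hj
        rw [Finset.mem_Icc] at hj
        have hKB := KB j hj.1 hj.2
        have hpj : 0 ≤ p j := hp j (by omega)
        calc p j * x (n+1) + x (h n) * (p j * max 0 (A - Q j))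
            = p j * (x (n+1) + x (h n) * max 0 (A - Q j)) := by ring
          _ ≤ p j * x (τ j) := mul_le_mul_of_nonneg_left hKB hpj
      calc P * x (n+1) + x (h n) * S
          = ∑ j ∈ Finset.Icc (n+1) (M-1),
              (p j * x (n+1) + x (h n) * (p j * max 0 (A - Q j))) := by
            rw [hPdef, hSdef, Finset.sum_add_distrib, Finset.sum_mul, Finset.mul_sum]
        _ ≤ _ := Finset.sum_le_sum this
    -- Q M > A
    have hQM : A < Q M := by
      have hsub : Finset.Ico (h M) M ⊆ Finset.Ico (n+1) M := by
        intro s hs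
        rw [Finset.mem_Ico] at hs ⊢
        exact ⟨le_trans hhM hs.1, hs.2⟩
      have hmono := Finset.sum_le_sum_of_subset_of_nonneg hsub
        (fun s hs _ => hp s (by rw [Finset.mem_Ico] at hs; omega))
      exact lt_of_lt_of_le (hwinR M (by omega)) hmono
    -- S ≥ A^2/2 by the discrete integral estimate
    have hS : A^2/2 ≤ S := by
      have ind : ∀ b : ℤ, n ≤ b →
          A^2 - (max 0 (A - Q (b+1)))^2 ≤ 2 * ∑ j ∈ Finset.Icc (n+1) b, p j * max 0 (A - Q j) := by
        intro b hb
        refine Int.le_induction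
          (motive := fun b _ => A^2 - (max 0 (A - Q (b+1)))^2 ≤
            2 * ∑ j ∈ Finset.Icc (n+1) b, p j * max 0 (A - Q j)) ?_ ?_ b hb
        · show A^2 - (max 0 (A - Q (n+1)))^2 ≤ 2 * ∑ j ∈ Finset.Icc (n+1) n, p j * max 0 (A - Q j)
          have h1 : Q (n+1) = 0 := by
            rw [hQdef]; simp
          have h2 : Finset.Icc (n+1) n = (∅ : Finset ℤ) := Finset.Icc_eq_empty (by omega)
          rw [h1, h2, Finset.sum_empty, sub_zero, max_eq_right (le_of_lt hA0)]
          ring_nf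
          linarith
        · intro b hb ih
          have hIcc : Finset.Icc (n+1) (b+1) = insert (b+1) (Finset.Icc (n+1) b) := by
            ext k; simp only [Finset.mem_Icc, Finset.mem_insert]; omega
          rw [hIcc, Finset.sum_insert (by simp)]
          have hQsucc : Q (b+1+1) = Q (b+1) + p (b+1) := by
            rw [hQdef]
            exact sum_Ico_top p (n+1) (b+1) (by omega)
          rw [hQsucc]
          have hpb : 0 ≤ p (b+1) := hp (b+1) (by omega)
          set q := A - Q (b+1) with hq
          have key : (max 0 q)^2 - (max 0 (q - p (b+1)))^2 ≤ 2 * (p (b+1) * max 0 q) := by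
            rcases le_or_gt q 0 with hq0 | hq0
            · rw [max_eq_left hq0, max_eq_left (by linarith)]
              simp
            · rw [max_eq_right (le_of_lt hq0)]
              rcases le_or_gt (q - p (b+1)) 0 with hqp | hqp
              · rw [max_eq_left hqp]
                nlinarith
              · rw [max_eq_right (le_of_lt hqp)]
                nlinarith
          have harg : A - (Q (b+1) + p (b+1)) = q - p (b+1) := by rw [hq]; ring
          rw [harg]
          linarith
      have hfin := ind (M-1) (by omega)
      rw [hMrw] at hfin
      have : max 0 (A - Q M) = 0 := max_eq_left (by linarith)
      rw [this] at hfin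
      rw [hSdef]
      nlinarith
    -- P = Q M > A
    have hPQ : P = Q M := by
      rw [hPdef, hQdef]
      have : Finset.Icc (n+1) (M-1) = Finset.Ico (n+1) M := by
        ext k; simp only [Finset.mem_Icc, Finset.mem_Ico]; omega
      rw [this]
    have hPA : A < P := hPQ ▸ hQM
    refine ⟨P, hPA, ?_⟩
    have hxhn0 : 0 < x (h n) := hposR (h n) hhnR1
    have hchain : x M + (P * x (n+1) + x (h n) * S) ≤ x (n+1) := by
      have := le_trans (add_le_add_right hFsum (x M)) hF
      linarith [hF, hFsum]
    have hxhS : x (h n) * (A^2/2) ≤ x (h n) * S :=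
      mul_le_mul_of_nonneg_left hS (le_of_lt hxhn0)
    nlinarith [hxM]
  -- derive the conclusion
  have hxhN : 0 < x (h N) := hposR (h N) (le_trans hR2R1 (hhN N le_rfl))
  have hxN1 : 0 < x (N+1) := hposR (N+1) (by
    have := le_trans hR2R1 (le_trans hR3R2 hNR3); omega)
  obtain ⟨P0, hP0A, hineq0⟩ := main N le_rfl
  have h1AD : 0 < 1 - A - D := by
    have hpos : 0 < x (h N) * (A^2/2) := mul_pos hxhN (by positivity)
    have h1DP : 0 < 1 - D - P0 := by
      by_contra hc
      push_neg at hc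
      nlinarith
    linarith
  refine ⟨h1AD, ?_⟩
  rw [eventually_atTop]
  refine ⟨N, fun n hn => ?_⟩
  obtain ⟨P, hPA, hineq⟩ := main n hn
  have hhnR1 : R1 ≤ h n := le_trans hR2R1 (hhN n hn)
  have hxhn : 0 < x (h n) := hposR (h n) hhnR1
  have hxn1 : 0 < x (n+1) := hposR (n+1) (by
    have h1 : R1 ≤ N := le_trans hR2R1 (le_trans hR3R2 hNR3)
    omega)
  rw [div_le_div_iff₀ h1AD hxhn]
  nlinarith

private lemma core2 (p : ℤ → ℝ) (h τ : ℤ → ℤ) (x : ℤ → ℝ) (A : ℝ)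
    (hA0 : 0 < A) (hA2 : A + 1 < Real.sqrt 2)
    (hp : ∀ n : ℤ, 0 ≤ n → 0 ≤ p n)
    (hτh : ∀ n : ℤ, 0 ≤ n → τ n ≤ h n)
    (hh1 : ∀ n : ℤ, 0 ≤ n → h n ≤ n - 1)
    (hhmono : Monotone h)
    (hhtop : Filter.Tendsto h Filter.atTop Filter.atTop)
    (hτtop : Filter.Tendsto τ Filter.atTop Filter.atTop)
    (hxpos : ∀ᶠ j in Filter.atTop, 0 < x j)
    (hstep : ∀ᶠ j in Filter.atTop, x (j+1) + p j * x (τ j) ≤ x j)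
    (hwin : ∀ᶠ n in Filter.atTop, A < ∑ j ∈ Finset.Ico (h n) n, p j) :
    (1 - A - Real.sqrt (1 - 2*A - A^2))/2 ≤
      Filter.liminf (fun n : ℤ => x (n+1) / x (h n)) Filter.atTop := by
  have hsqrt2 : Real.sqrt 2 < 2 := by
    nlinarith [Real.sq_sqrt (show (0:ℝ) ≤ 2 by norm_num), Real.sqrt_nonneg (2:ℝ)]
  have hA1 : A < 1 := by linarith
  have hdisc : 0 ≤ 1 - 2*A - A^2 := by
    nlinarith [Real.sq_sqrt (show (0:ℝ) ≤ 2 by norm_num), Real.sqrt_nonneg (2:ℝ), hA2, hA0]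
  obtain ⟨R0, hR0⟩ := eventually_atTop.1 hxpos
  have hstep' : ∀ᶠ j in atTop, x (j+1) ≤ x j := by
    filter_upwards [hstep, hτtop.eventually_ge_atTop R0, eventually_ge_atTop (0:ℤ)]
      with j h1 h2 h3
    have := mul_nonneg (hp j h3) (hR0 _ h2).le
    linarith
  obtain ⟨Ra', hRa'⟩ := eventually_atTop.1 hstep'
  set Ra : ℤ := max Ra' R0 with hRadef
  have hantiRa : ∀ a b : ℤ, Ra ≤ a → a ≤ b → x b ≤ x a :=
    ev_anti x Ra (fun j hj => hRa' j (le_trans (le_max_left _ _) hj))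
  have hposRa : ∀ j, Ra ≤ j → 0 < x j := fun j hj => hR0 j (le_trans (le_max_right _ _) hj)
  set r : ℤ → ℝ := fun n => x (n+1) / x (h n) with hrdef
  have hub : ∀ᶠ n in atTop, r n ≤ 1 := by
    filter_upwards [hhtop.eventually_ge_atTop Ra, eventually_ge_atTop (0:ℤ)] with n h1 h2
    have hxhn : 0 < x (h n) := hposRa _ h1
    have hle : x (n+1) ≤ x (h n) := hantiRa (h n) (n+1) h1 (by have := hh1 n h2; omega)
    rw [hrdef]
    exact div_le_one_of_le₀ hle hxhn.le
  have hlb : ∀ᶠ n in atTop, 0 < r n := by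
    filter_upwards [hhtop.eventually_ge_atTop Ra, eventually_ge_atTop Ra] with n h1 h2
    exact div_pos (hposRa _ (by omega)) (hposRa _ h1)
  have hcob : IsCoboundedUnder (· ≥ ·) atTop r :=
    (isBoundedUnder_of_eventually_le hub).isCoboundedUnder_ge
  have hbdd : IsBoundedUnder (· ≥ ·) atTop r :=
    isBoundedUnder_of_eventually_ge (hlb.mono fun n hn => hn.le)
  set Li := Filter.liminf r atTop with hLidef
  have key := core p h τ x A hA0 hp hτh hh1 hhmono hhtop hτtop hxpos hstep hwin
  obtain ⟨h1A, hev0⟩ := key 0 le_rfl (by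
    filter_upwards [eventually_ge_atTop Ra] with j hj
    rw [zero_mul]
    exact (hposRa (j+1) (by omega)).le)
  have hLi0 : 0 < Li := by
    have h1 : (A^2/2)/(1-A-0) ≤ Li := Filter.le_liminf_of_le hcob hev0
    have h2 : 0 < (A^2/2)/(1-A-0) := div_pos (by positivity) h1A
    linarith
  have quad : ∀ ε : ℝ, 0 < ε → ε < Li →
      0 < 1 - A - (Li - ε) ∧ A^2/2 ≤ Li * (1 - A - (Li - ε)) := by
    intro ε hε hεLi
    have hevlt := Filter.eventually_lt_of_lt_liminf (show Li - ε < Li by linarith) hbdd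
    have hevD : ∀ᶠ j in atTop, (Li - ε) * x (h j) ≤ x (j+1) := by
      filter_upwards [hevlt, hhtop.eventually_ge_atTop Ra] with j h1 h2
      have hxhj : 0 < x (h j) := hposRa _ h2
      have := (lt_div_iff₀ hxhj).1 h1
      linarith
    obtain ⟨hpos1, hev1⟩ := key (Li - ε) (by linarith) hevD
    refine ⟨hpos1, ?_⟩
    have hle := Filter.le_liminf_of_le hcob hev1
    rw [div_le_iff₀ hpos1] at hle
    linarith
  have hLile : Li ≤ 1 - A := by
    by_contra hc
    push_neg at hc
    have h1A0 : 0 < 1 - A := by linarith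
    have hε : 0 < (Li - (1 - A))/2 := by linarith
    have hεLi : (Li - (1 - A))/2 < Li := by linarith
    have := (quad _ hε hεLi).1
    linarith
  have hquad : A^2/2 ≤ Li * (1 - A - Li) := by
    by_contra hc
    push_neg at hc
    set δ := A^2/2 - Li * (1 - A - Li) with hδdef
    have hδ0 : 0 < δ := by rw [hδdef]; linarith
    set ε := min (Li/2) (δ/(2*Li)) with hεdef
    have hε0 : 0 < ε := lt_min (by linarith) (by positivity)
    have hεLi : ε < Li := lt_of_le_of_lt (min_le_left _ _) (by linarith)
    obtain ⟨h1, h2⟩ := quad ε hε0 hεLi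
    have hεδ : ε ≤ δ/(2*Li) := min_le_right _ _
    have hLε : Li * ε ≤ δ/2 := by
      have h3 := mul_le_mul_of_nonneg_left hεδ hLi0.le
      have h4 : Li * (δ/(2*Li)) = δ/2 := by
        field_simp
      linarith
    nlinarith
  have hs0 : 0 ≤ Real.sqrt (1 - 2*A - A^2) := Real.sqrt_nonneg _
  have hs2 : (Real.sqrt (1 - 2*A - A^2))^2 = 1 - 2*A - A^2 := Real.sq_sqrt hdisc
  nlinarith [sq_nonneg (2*Li - (1 - A) + Real.sqrt (1 - 2*A - A^2)), hquad, hLile, hs0, hs2, hLi0]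

/-- Lemma 2.2: if `x` is an eventually positive solution of the retarded equation,
`α_i = liminf_{n→∞} ∑_{j=φ_i(n)}^{n-1} p_i(j)`, `α = min_i α_i` and `0 < α ≤ -1 + √2`,
then `liminf_{n→∞} x(n+1)/x(φ(n)) ≥ (1 - α - √(1 - 2α - α²))/2`. -/
theorem stmt_3 {m : ℕ} [NeZero m] (p : Fin m → ℤ → ℝ) (τ : Fin m → ℤ → ℤ)
    (hp : ∀ i : Fin m, ∀ n : ℤ, 0 ≤ n → 0 ≤ p i n)
    (hτ : ∀ i : Fin m, ∀ n : ℤ, 0 ≤ n → τ i n ≤ n - 1)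
    (hτlim : ∀ i : Fin m, Filter.Tendsto (τ i) Filter.atTop Filter.atTop)
    (x : ℤ → ℝ)
    (hxeq : ∀ n : ℤ, 0 ≤ n → x (n + 1) - x n + ∑ i : Fin m, p i n * x (τ i n) = 0)
    (hxpos : ∃ N : ℤ, ∀ n ≥ N, 0 < x n)
    (α : ℝ)
    (hα : α = Finset.univ.inf' Finset.univ_nonempty (fun i : Fin m =>
        Filter.liminf (fun n : ℤ => ∑ j ∈ Finset.Ico (phii τ i n) n, p i j) Filter.atTop))
    (hα0 : 0 < α) (hα1 : α ≤ -1 + Real.sqrt 2) :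
    (1 - α - Real.sqrt (1 - 2 * α - α ^ 2)) / 2 ≤
      Filter.liminf (fun n : ℤ => x (n + 1) / x (phi τ n)) Filter.atTop := by
  have him : Nonempty (Fin m) := ⟨⟨0, Nat.pos_of_ne_zero (NeZero.ne m)⟩⟩
  set i0 : Fin m := Classical.arbitrary (Fin m) with hi0
  -- basic facts about phii and phi
  have hτ_le_phii : ∀ i : Fin m, ∀ n : ℤ, 0 ≤ n → τ i n ≤ phii τ i n := by
    intro i n hn
    unfold phii
    exact (Finset.le_fold_max _).2 (Or.inr ⟨n, Finset.mem_Icc.2 ⟨hn, le_rfl⟩, le_rfl⟩)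
  have hphii_le : ∀ i : Fin m, ∀ n : ℤ, 0 ≤ n → phii τ i n ≤ n - 1 := by
    intro i n hn
    unfold phii
    rw [Finset.fold_max_le]
    refine ⟨by have := hτ i 0 le_rfl; omega, fun s hs => ?_⟩
    have hs' := Finset.mem_Icc.1 hs
    have := hτ i s hs'.1
    omega
  have hphii_mono : ∀ i : Fin m, Monotone (phii τ i) := by
    intro i a b hab
    unfold phii
    rw [Finset.fold_max_le]
    refine ⟨(Finset.le_fold_max _).2 (Or.inl le_rfl), fun s hs => ?_⟩
    refine (Finset.le_fold_max _).2 (Or.inr ⟨s, ?_, le_rfl⟩)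
    have hs' := Finset.mem_Icc.1 hs
    exact Finset.mem_Icc.2 ⟨hs'.1, hs'.2.trans hab⟩
  have hphii_top : ∀ i : Fin m, Filter.Tendsto (phii τ i) Filter.atTop Filter.atTop := by
    intro i
    refine Filter.tendsto_atTop_mono' Filter.atTop ?_ (hτlim i)
    filter_upwards [Filter.eventually_ge_atTop (0:ℤ)] with n hn
    exact hτ_le_phii i n hn
  have hphii_le_phi : ∀ i : Fin m, ∀ n : ℤ, phii τ i n ≤ phi τ n := by
    intro i n
    unfold phi
    exact Finset.le_sup' (fun i => phii τ i n) (Finset.mem_univ i)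
  have hphi_le : ∀ n : ℤ, 0 ≤ n → phi τ n ≤ n - 1 := by
    intro n hn
    unfold phi
    exact Finset.sup'_le _ _ fun i _ => hphii_le i n hn
  have hphi_top : Filter.Tendsto (phi τ) Filter.atTop Filter.atTop :=
    Filter.tendsto_atTop_mono (fun n => hphii_le_phi i0 n) (hphii_top i0)
  -- positivity and the one-delay inequality
  obtain ⟨N0, hN0⟩ := hxpos
  have hxposev : ∀ᶠ j in Filter.atTop, 0 < x j := Filter.eventually_atTop.2 ⟨N0, hN0⟩
  have hτall : ∀ᶠ j in Filter.atTop, ∀ i, N0 ≤ τ i j :=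
    Filter.eventually_all.2 fun i => (hτlim i).eventually_ge_atTop N0
  have hstep_i0 : ∀ᶠ j in Filter.atTop, x (j+1) + p i0 j * x (τ i0 j) ≤ x j := by
    filter_upwards [hτall, Filter.eventually_ge_atTop (0:ℤ)] with j hj hj0
    have heq := hxeq j hj0
    have hsingle : p i0 j * x (τ i0 j) ≤ ∑ i, p i j * x (τ i j) :=
      Finset.single_le_sum (fun i _ => mul_nonneg (hp i j hj0) (hN0 _ (hj i)).le)
        (Finset.mem_univ i0)
    linarith
  -- anti-monotonicity thresholds (for the comparison of the two ratios)
  have hstepall : ∀ᶠ j in Filter.atTop, x (j+1) ≤ x j := by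
    filter_upwards [hstep_i0, hτall, Filter.eventually_ge_atTop (0:ℤ)] with j h1 h2 h3
    have := mul_nonneg (hp i0 j h3) (hN0 _ (h2 i0)).le
    linarith
  obtain ⟨Ra', hRa'⟩ := Filter.eventually_atTop.1 hstepall
  set Ra : ℤ := max Ra' N0 with hRadef
  have hantiRa : ∀ a b : ℤ, Ra ≤ a → a ≤ b → x b ≤ x a :=
    ev_anti x Ra (fun j hj => hRa' j (le_trans (le_max_left _ _) hj))
  have hposRa : ∀ j, Ra ≤ j → 0 < x j := fun j hj => hN0 j (le_trans (le_max_right _ _) hj)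
  -- comparison of ratios
  have hev_le : ∀ᶠ n in Filter.atTop,
      x (n+1) / x (phii τ i0 n) ≤ x (n+1) / x (phi τ n) := by
    filter_upwards [(hphii_top i0).eventually_ge_atTop Ra, Filter.eventually_ge_atTop Ra]
      with n h1 h2
    have h4 : phii τ i0 n ≤ phi τ n := hphii_le_phi i0 n
    have hxphi_pos : 0 < x (phi τ n) := hposRa _ (le_trans h1 h4)
    have hxle : x (phi τ n) ≤ x (phii τ i0 n) := hantiRa _ _ h1 h4
    have hxn1 : 0 < x (n+1) := hposRa _ (by omega)
    gcongr
  have hub_phi : ∀ᶠ n in Filter.atTop, x (n+1) / x (phi τ n) ≤ 1 := by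
    filter_upwards [hphi_top.eventually_ge_atTop Ra, Filter.eventually_ge_atTop (0:ℤ)]
      with n h1 h2
    have hxphi_pos : 0 < x (phi τ n) := hposRa _ h1
    have hle : x (n+1) ≤ x (phi τ n) := hantiRa _ _ h1 (by have := hphi_le n h2; omega)
    exact div_le_one_of_le₀ hle hxphi_pos.le
  have hlb_i0 : ∀ᶠ n in Filter.atTop, (0:ℝ) ≤ x (n+1) / x (phii τ i0 n) := by
    filter_upwards [(hphii_top i0).eventually_ge_atTop Ra, Filter.eventually_ge_atTop Ra]
      with n h1 h2
    exact (div_pos (hposRa _ (by omega)) (hposRa _ h1)).le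
  have hLiL : Filter.liminf (fun n : ℤ => x (n+1) / x (phii τ i0 n)) Filter.atTop ≤
      Filter.liminf (fun n : ℤ => x (n + 1) / x (phi τ n)) Filter.atTop :=
    Filter.liminf_le_liminf hev_le
      (Filter.isBoundedUnder_of_eventually_ge hlb_i0)
      ((Filter.isBoundedUnder_of_eventually_le hub_phi).isCoboundedUnder_ge)
  -- Step X : for every 0 < A < α the constant of A bounds the liminf for i0
  have stepX : ∀ A : ℝ, 0 < A → A < α →
      (1 - A - Real.sqrt (1 - 2*A - A^2))/2 ≤
        Filter.liminf (fun n : ℤ => x (n+1) / x (phii τ i0 n)) Filter.atTop := by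
    intro A hA0' hAα
    have hαle : α ≤ Filter.liminf
        (fun n : ℤ => ∑ j ∈ Finset.Ico (phii τ i0 n) n, p i0 j) Filter.atTop := by
      rw [hα]
      exact Finset.inf'_le _ (Finset.mem_univ i0)
    have hu0 : ∀ᶠ n in Filter.atTop,
        (0:ℝ) ≤ ∑ j ∈ Finset.Ico (phii τ i0 n) n, p i0 j := by
      filter_upwards [(hphii_top i0).eventually_ge_atTop 0] with n hn
      refine Finset.sum_nonneg fun j hj => ?_
      have := Finset.mem_Ico.1 hj
      exact hp i0 j (le_trans hn this.1)
    have hwinA : ∀ᶠ n in Filter.atTop, A < ∑ j ∈ Finset.Ico (phii τ i0 n) n, p i0 j :=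
      Filter.eventually_lt_of_lt_liminf (lt_of_lt_of_le hAα hαle)
        (Filter.isBoundedUnder_of_eventually_ge hu0)
    have hA2 : A + 1 < Real.sqrt 2 := by linarith
    exact core2 (p i0) (phii τ i0) (τ i0) x A hA0' hA2 (hp i0) (hτ_le_phii i0)
      (hphii_le i0) (hphii_mono i0) (hphii_top i0) (hτlim i0) hxposev hstep_i0 hwinA
  -- Step Z : let A → α⁻
  have hcont : ContinuousAt (fun B : ℝ => (1 - B - Real.sqrt (1 - 2*B - B^2))/2) α := by
    have : Continuous (fun B : ℝ => (1 - B - Real.sqrt (1 - 2*B - B^2))/2) := by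
      have hq : Continuous (fun B : ℝ => 1 - 2*B - B^2) :=
        (continuous_const.sub (continuous_const.mul continuous_id)).sub (continuous_pow 2)
      apply Continuous.div_const
      exact (continuous_const.sub continuous_id).sub (Real.continuous_sqrt.comp hq)
    exact this.continuousAt
  have htend : Filter.Tendsto (fun B : ℝ => (1 - B - Real.sqrt (1 - 2*B - B^2))/2)
      (nhdsWithin α (Set.Iio α)) (nhds ((1 - α - Real.sqrt (1 - 2*α - α^2))/2)) :=
    hcont.tendsto.mono_left nhdsWithin_le_nhds
  have hfinal : (1 - α - Real.sqrt (1 - 2*α - α^2))/2 ≤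
      Filter.liminf (fun n : ℤ => x (n + 1) / x (phi τ n)) Filter.atTop := by
    refine le_of_tendsto htend ?_
    filter_upwards [Ioo_mem_nhdsLT_of_mem (show α ∈ Set.Ioc 0 α from ⟨hα0, le_rfl⟩)]
      with A hA
    exact le_trans (stepX A hA.1 hA.2) hLiL
  exact hfinal
end

section
/- Assume lim_{n→∞} τ_i(n) = ∞ for each 1 ≤ i ≤ m and Σ_{i=1}^m p_i(n) < 1 for all n ≥ 0. Set α_i = liminf_{n→∞} Σ_{j=φ_i(n)}^{n−1} p_i(j) and α = min_{1≤i≤m} α_i. If 0 < α ≤ 1/e and for some r ∈ ℕ, limsup_{n→∞} Σ_{j=φ(n)}^{n} Σ_{i=1}^m p_i(j) a_r(φ(n), τ_i(j))^{−1} > 1 − (1 − α − √(1 − 2α − α²))/2, then every solution of (E_R) oscillates. -/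
open Filter Finset

/-! ### Generic helpers -/

lemma zIco_succ_insert {a b : ℤ} (h : a ≤ b) :
    Finset.Ico a (b+1) = insert b (Finset.Ico a b) := by
  ext j; simp only [Finset.mem_Ico, Finset.mem_insert]; omega

lemma zIcc_succ_insert {a b : ℤ} (h : a ≤ b + 1) :
    Finset.Icc a (b+1) = insert (b+1) (Finset.Icc a b) := by
  ext j; simp only [Finset.mem_Icc, Finset.mem_insert]; omega

lemma zsum_Ico_succ (f : ℤ → ℝ) {a b : ℤ} (h : a ≤ b) :
    (∑ j ∈ Finset.Ico a (b+1), f j) = (∑ j ∈ Finset.Ico a b, f j) + f b := by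
  rw [zIco_succ_insert h, Finset.sum_insert (by simp), add_comm]

lemma zprod_Ico_succ (f : ℤ → ℝ) {a b : ℤ} (h : a ≤ b) :
    (∏ j ∈ Finset.Ico a (b+1), f j) = (∏ j ∈ Finset.Ico a b, f j) * f b := by
  rw [zIco_succ_insert h, Finset.prod_insert (by simp), mul_comm]

lemma zsum_Icc_succ (f : ℤ → ℝ) {a b : ℤ} (h : a ≤ b + 1) :
    (∑ j ∈ Finset.Icc a (b+1), f j) = (∑ j ∈ Finset.Icc a b, f j) + f (b+1) := by
  rw [zIcc_succ_insert h, Finset.sum_insert (by simp), add_comm]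

lemma zIcc_empty (a : ℤ) : Finset.Icc a (a - 1) = ∅ := by
  apply Finset.Icc_eq_empty; omega

lemma zIco_eq_Icc {a b : ℤ} : Finset.Ico a (b+1) = Finset.Icc a b := by
  ext j; simp only [Finset.mem_Ico, Finset.mem_Icc]; omega

lemma telescope_le (u g : ℤ → ℝ) {a : ℤ} : ∀ b : ℤ, a - 1 ≤ b →
    (∀ j, a ≤ j → j ≤ b → g j ≤ u j - u (j+1)) →
    (∑ j ∈ Finset.Icc a b, g j) ≤ u a - u (b+1) := by
  refine Int.le_induction ?_ ?_
  · intro _; rw [zIcc_empty]; simp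
  · intro b hb ih hstep
    rw [zsum_Icc_succ _ (by omega)]
    have h1 := ih (fun j hj hj' => hstep j hj (by omega))
    have h2 := hstep (b+1) (by omega) le_rfl
    linarith

lemma telescope_ge (u g : ℤ → ℝ) {a : ℤ} : ∀ b : ℤ, a - 1 ≤ b →
    (∀ j, a ≤ j → j ≤ b → u j - u (j+1) ≤ g j) →
    u a - u (b+1) ≤ (∑ j ∈ Finset.Icc a b, g j) := by
  refine Int.le_induction ?_ ?_
  · intro _; rw [zIcc_empty]; simp
  · intro b hb ih hstep
    rw [zsum_Icc_succ _ (by omega)]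
    have h1 := ih (fun j hj hj' => hstep j hj (by omega))
    have h2 := hstep (b+1) (by omega) le_rfl
    linarith

lemma telescope_eq (u g : ℤ → ℝ) {a b : ℤ} (hb : a - 1 ≤ b)
    (hstep : ∀ j, a ≤ j → j ≤ b → u j - u (j+1) = g j) :
    (∑ j ∈ Finset.Icc a b, g j) = u a - u (b+1) :=
  le_antisymm (telescope_le u g b hb (fun j h1 h2 => (hstep j h1 h2).ge))
    (telescope_ge u g b hb (fun j h1 h2 => (hstep j h1 h2).le))

lemma prod_telescope (u f : ℤ → ℝ) {k : ℤ} : ∀ n : ℤ, k ≤ n →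
    (∀ j, k ≤ j → j < n → u (j+1) ≤ f j * u j) →
    (∀ j, k ≤ j → j < n → 0 ≤ f j) →
    u n ≤ (∏ j ∈ Finset.Ico k n, f j) * u k := by
  refine Int.le_induction ?_ ?_
  · intro _ _; simp
  · intro n hn ih hstep hnn
    have h1 := ih (fun j hj hj' => hstep j hj (by omega)) (fun j hj hj' => hnn j hj (by omega))
    have h2 := hstep n hn (by omega)
    have h3 := hnn n hn (by omega)
    rw [zprod_Ico_succ _ hn]
    calc u (n+1) ≤ f n * u n := h2
      _ ≤ f n * ((∏ j ∈ Finset.Ico k n, f j) * u k) := mul_le_mul_of_nonneg_left h1 h3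
      _ = (∏ j ∈ Finset.Ico k n, f j) * f n * u k := by ring

lemma sum_weight {q : ℤ → ℝ} {s t : ℤ} {a : ℝ} (ha : 0 < a) (hst : s ≤ t)
    (hq : ∀ j, s ≤ j → j ≤ t → 0 ≤ q j)
    (hsmall : (∑ j ∈ Finset.Ico s t, q j) < a)
    (hlast : a ≤ ∑ j ∈ Finset.Icc s t, q j) :
    a^2/2 ≤ ∑ j ∈ Finset.Icc s t, q j * (a - ∑ i ∈ Finset.Ico s j, q i) := by
  set ρ : ℤ → ℝ := fun j => ∑ i ∈ Finset.Ico s j, q i with hρ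
  set F : ℤ → ℝ := fun j => (a - min (ρ j) a)^2 / 2 with hF
  have hρmono : ∀ j, s ≤ j → j ≤ t → ρ j ≤ ρ t := by
    intro j hj hj'
    apply Finset.sum_le_sum_of_subset_of_nonneg
    · apply Finset.Ico_subset_Ico le_rfl hj'
    · intro i hi _; exact hq i (by simp at hi; omega) (by simp at hi; omega)
  have hρsucc : ∀ j, s ≤ j → ρ (j+1) = ρ j + q j := fun j hj => zsum_Ico_succ q hj
  have key : F s - F (t+1) ≤ ∑ j ∈ Finset.Icc s t, q j * (a - ρ j) := by
    apply telescope_ge F _ t (by omega)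
    intro j hj hj'
    have hρj : ρ j < a := lt_of_le_of_lt (hρmono j hj hj') hsmall
    have hminj : min (ρ j) a = ρ j := min_eq_left hρj.le
    have hqj : 0 ≤ q j := hq j hj hj'
    have hs : ρ (j+1) = ρ j + q j := hρsucc j hj
    have e0 : F j = (a - ρ j)^2/2 := by simp only [hF, hminj]
    rcases le_or_gt (ρ (j+1)) a with hc | hc
    · have e1 : F (j+1) = (a - ρ (j+1))^2/2 := by
        simp only [hF, min_eq_left hc]
      rw [hs] at e1
      rw [e0, e1]
      nlinarith [hρj.le]
    · have e1 : F (j+1) = 0 := by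
        simp only [hF, min_eq_right hc.le]; try ring
      rw [e0, e1]
      have h1 : a - ρ j ≤ q j := by rw [hs] at hc; linarith
      have h2 : 0 ≤ a - ρ j := by linarith
      nlinarith
  have hFs : F s = a^2/2 := by
    have h0 : ρ s = 0 := by simp [hρ]
    simp only [hF, h0, min_eq_left ha.le]
    try ring
  have hFt : F (t+1) = 0 := by
    have h1 : ρ (t+1) = ∑ j ∈ Finset.Icc s t, q j := by
      simp only [hρ]
      rw [zIco_eq_Icc]
    have h2 : min (ρ (t+1)) a = a := min_eq_right (by rw [h1]; exact hlast)
    simp only [hF, h2]; try ring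
  rw [hFs, hFt] at key; linarith

lemma quad_root {α d : ℝ} (hΔ : 0 ≤ 1 - 2*α - α^2)
    (hq : d^2 - (1-α)*d + α^2/2 ≤ 0) :
    (1 - α - Real.sqrt (1 - 2*α - α^2))/2 ≤ d := by
  have h1 : (2*d - (1-α))^2 ≤ 1 - 2*α - α^2 := by nlinarith
  have h2 : |2*d - (1-α)| ≤ Real.sqrt (1 - 2*α - α^2) := by
    rw [← Real.sqrt_sq_eq_abs]
    exact Real.sqrt_le_sqrt h1
  have h3 : -(Real.sqrt (1 - 2*α - α^2)) ≤ 2*d - (1-α) := neg_le_of_abs_le h2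
  linarith

lemma zsum_Ico_consecutive (f : ℤ → ℝ) {a b c : ℤ} (hab : a ≤ b) (hbc : b ≤ c) :
    (∑ j ∈ Finset.Ico a b, f j) + (∑ j ∈ Finset.Ico b c, f j) = ∑ j ∈ Finset.Ico a c, f j := by
  rw [← Finset.sum_union (Finset.Ico_disjoint_Ico_consecutive a b c),
    Finset.Ico_union_Ico_eq_Ico hab hbc]

set_option maxHeartbeats 1600000 in
lemma noPos {m : ℕ} [NeZero m] (p : Fin m → ℤ → ℝ) (τ : Fin m → ℤ → ℤ)
    (hp : ∀ i : Fin m, ∀ n : ℤ, 0 ≤ n → 0 ≤ p i n)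
    (hτ : ∀ i : Fin m, ∀ n : ℤ, 0 ≤ n → τ i n ≤ n - 1)
    (hτlim : ∀ i : Fin m, Filter.Tendsto (τ i) Filter.atTop Filter.atTop)
    (hsum : ∀ n : ℤ, 0 ≤ n → ∑ i : Fin m, p i n < 1)
    (α : ℝ)
    (hα : α = Finset.univ.inf' Finset.univ_nonempty (fun i : Fin m =>
        Filter.liminf (fun n : ℤ => ∑ j ∈ Finset.Ico (phii τ i n) n, p i j) Filter.atTop))
    (hα0 : 0 < α) (hα1 : α ≤ 1 / Real.exp 1)
    (r : ℕ)
    (hcond : 1 - (1 - α - Real.sqrt (1 - 2 * α - α ^ 2)) / 2 <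
      Filter.limsup (fun n : ℤ =>
        ∑ j ∈ Finset.Icc (phi τ n) n, ∑ i : Fin m, p i j * (aR p τ r (phi τ n) (τ i j))⁻¹)
      Filter.atTop)
    (x : ℤ → ℝ)
    (hxeq : ∀ n : ℤ, 0 ≤ n → x (n + 1) - x n + ∑ i : Fin m, p i n * x (τ i n) = 0)
    (N : ℤ) (hposN : ∀ n ≥ N, 0 < x n) : False := by
  classical
  obtain ⟨i₀⟩ : Nonempty (Fin m) := Fin.pos_iff_nonempty.1 (Nat.pos_of_ne_zero (NeZero.ne m))
  -- basic facts about phii / phi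
  have hphii_le : ∀ (i : Fin m) (n : ℤ), 0 ≤ n → phii τ i n ≤ n - 1 := by
    intro i n hn
    unfold phii
    rw [Finset.fold_max_le]
    refine ⟨by have := hτ i 0 le_rfl; omega, ?_⟩
    intro s hs
    rw [Finset.mem_Icc] at hs
    have := hτ i s hs.1
    omega
  have hτ_le_phii : ∀ (i : Fin m) (s n : ℤ), 0 ≤ s → s ≤ n → τ i s ≤ phii τ i n := by
    intro i s n h0 hsn
    unfold phii
    rw [Finset.le_fold_max]
    exact Or.inr ⟨s, Finset.mem_Icc.2 ⟨h0, hsn⟩, le_rfl⟩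
  have hphii_mono : ∀ (i : Fin m) (a b : ℤ), 0 ≤ a → a ≤ b → phii τ i a ≤ phii τ i b := by
    intro i a b h0 hab
    unfold phii
    rw [Finset.fold_max_le]
    constructor
    · rw [Finset.le_fold_max]; exact Or.inl le_rfl
    · intro s hs
      rw [Finset.mem_Icc] at hs
      rw [Finset.le_fold_max]
      exact Or.inr ⟨s, Finset.mem_Icc.2 ⟨hs.1, le_trans hs.2 hab⟩, le_rfl⟩
  have hphii_le_phi : ∀ (i : Fin m) (n : ℤ), phii τ i n ≤ phi τ n := by
    intro i n
    exact Finset.le_sup' (fun i => phii τ i n) (Finset.mem_univ i)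
  have hphi_le : ∀ n : ℤ, 0 ≤ n → phi τ n ≤ n - 1 := by
    intro n hn
    exact Finset.sup'_le _ _ (fun i _ => hphii_le i n hn)
  have hhtop : Filter.Tendsto (fun n => phii τ i₀ n) Filter.atTop Filter.atTop := by
    apply tendsto_atTop_mono' _ _ (hτlim i₀)
    filter_upwards [Filter.eventually_ge_atTop (0 : ℤ)] with n hn
    exact hτ_le_phii i₀ n n hn le_rfl
  have hphitop : Filter.Tendsto (phi τ) Filter.atTop Filter.atTop := by
    apply tendsto_atTop_mono' _ _ hhtop
    filter_upwards with n
    exact hphii_le_phi i₀ n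
  -- positivity and monotonicity regions
  set N₀ : ℤ := max N 0 with hN₀
  have hx0 : ∀ n : ℤ, N₀ ≤ n → 0 < x n := fun n hn => hposN n (by omega)
  have hN₀0 : (0:ℤ) ≤ N₀ := by omega
  have hev1 : ∀ᶠ n in (Filter.atTop : Filter ℤ), ∀ i : Fin m, N₀ ≤ τ i n :=
    Filter.eventually_all.2 fun i => (hτlim i).eventually_ge_atTop N₀
  obtain ⟨N₁', hN₁'⟩ := Filter.eventually_atTop.1 hev1
  set N₁ : ℤ := max N₁' N₀ with hN₁def
  have hN₁ : N₀ ≤ N₁ := by omega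
  have hτN₁ : ∀ n, N₁ ≤ n → ∀ i : Fin m, N₀ ≤ τ i n := fun n hn => hN₁' n (by omega)
  have hxdec : ∀ n, N₁ ≤ n → x (n+1) ≤ x n := by
    intro n hn
    have h0n : (0:ℤ) ≤ n := by omega
    have heq := hxeq n h0n
    have hnn : 0 ≤ ∑ i : Fin m, p i n * x (τ i n) := by
      apply Finset.sum_nonneg
      intro i _
      exact mul_nonneg (hp i n h0n) (hx0 _ (hτN₁ n hn i)).le
    linarith
  have hmono : ∀ a b : ℤ, N₁ ≤ a → a ≤ b → x b ≤ x a := by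
    intro a b ha hab
    refine Int.le_induction (m := a) (motive := fun b _ => x b ≤ x a) le_rfl ?_ b hab
    intro n hn ih
    exact le_trans (hxdec n (by omega)) ih
  have hev2 : ∀ᶠ n in (Filter.atTop : Filter ℤ), ∀ i : Fin m, N₁ ≤ τ i n :=
    Filter.eventually_all.2 fun i => (hτlim i).eventually_ge_atTop N₁
  obtain ⟨N₂', hN₂'⟩ := Filter.eventually_atTop.1 hev2
  set N₂ : ℤ := max N₂' N₁ with hN₂def
  have hN₂ : N₁ ≤ N₂ := by omega
  have hτN₂ : ∀ n, N₂ ≤ n → ∀ i : Fin m, N₁ ≤ τ i n := fun n hn => hN₂' n (by omega)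
  have hhge : ∀ n, N₂ ≤ n → N₁ ≤ phii τ i₀ n := by
    intro n hn
    exact le_trans (hτN₂ n hn i₀) (hτ_le_phii i₀ n n (by omega) le_rfl)
  -- single delay inequality
  have hsd : ∀ n, N₂ ≤ n → x (n+1) ≤ x n - p i₀ n * x (phii τ i₀ n) := by
    intro n hn
    have h0n : (0:ℤ) ≤ n := by omega
    have heq := hxeq n h0n
    have hterm : p i₀ n * x (phii τ i₀ n) ≤ p i₀ n * x (τ i₀ n) := by
      have hx1 : x (phii τ i₀ n) ≤ x (τ i₀ n) := by
        apply hmono (τ i₀ n) (phii τ i₀ n) (hτN₂ n hn i₀) (hτ_le_phii i₀ n n h0n le_rfl)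
      exact mul_le_mul_of_nonneg_left hx1 (hp i₀ n h0n)
    have hsingle : p i₀ n * x (τ i₀ n) ≤ ∑ i : Fin m, p i n * x (τ i n) := by
      apply Finset.single_le_sum (f := fun i : Fin m => p i n * x (τ i n))
      · intro i _
        exact mul_nonneg (hp i n h0n) (hx0 _ (le_trans hN₁ (hτN₂ n hn i))).le
      · exact Finset.mem_univ i₀
    linarith
  -- window sums
  have hliminf : α ≤ Filter.liminf
      (fun n : ℤ => ∑ j ∈ Finset.Ico (phii τ i₀ n) n, p i₀ j) Filter.atTop := by
    rw [hα]
    exact Finset.inf'_le _ (Finset.mem_univ i₀)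
  have hwinnn : ∀ᶠ n in (Filter.atTop : Filter ℤ),
      (0:ℝ) ≤ ∑ j ∈ Finset.Ico (phii τ i₀ n) n, p i₀ j := by
    filter_upwards [Filter.eventually_ge_atTop N₂] with n hn
    apply Finset.sum_nonneg
    intro j hj
    rw [Finset.mem_Ico] at hj
    have := hhge n hn
    exact hp i₀ j (by omega)
  have hwin : ∀ a : ℝ, a < α → ∀ᶠ n in (Filter.atTop : Filter ℤ),
      a < ∑ j ∈ Finset.Ico (phii τ i₀ n) n, p i₀ j := by
    intro a ha
    exact Filter.eventually_lt_of_lt_liminf (lt_of_lt_of_le ha hliminf)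
      (Filter.isBoundedUnder_of_eventually_ge hwinnn)
  -- the ratio and its liminf
  have hratev : ∀ n, N₂ ≤ n →
      0 < x (n+1) / x (phii τ i₀ n) ∧ x (n+1) / x (phii τ i₀ n) ≤ 1 := by
    intro n hn
    have hxh : 0 < x (phii τ i₀ n) := hx0 _ (le_trans hN₁ (hhge n hn))
    have hxn1 : 0 < x (n+1) := hx0 _ (by omega)
    constructor
    · exact div_pos hxn1 hxh
    · rw [div_le_one hxh]
      exact hmono (phii τ i₀ n) (n+1) (hhge n hn) (by have := hphii_le i₀ n (by omega); omega)
  set d : ℝ := Filter.liminf (fun n : ℤ => x (n+1) / x (phii τ i₀ n)) Filter.atTop with hd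
  have hratpos : ∀ᶠ n in (Filter.atTop : Filter ℤ), (0:ℝ) ≤ x (n+1) / x (phii τ i₀ n) := by
    filter_upwards [Filter.eventually_ge_atTop N₂] with n hn
    exact (hratev n hn).1.le
  have hratle1 : ∀ᶠ n in (Filter.atTop : Filter ℤ), x (n+1) / x (phii τ i₀ n) ≤ 1 := by
    filter_upwards [Filter.eventually_ge_atTop N₂] with n hn
    exact (hratev n hn).2
  have hd_lb : ∀ δ : ℝ, 0 < δ → ∀ᶠ n in (Filter.atTop : Filter ℤ),
      d - δ < x (n+1) / x (phii τ i₀ n) := by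
    intro δ hδ
    exact Filter.eventually_lt_of_lt_liminf (by linarith)
      (Filter.isBoundedUnder_of_eventually_ge hratpos)
  have hd_from : ∀ K : ℝ,
      (∀ᶠ n in (Filter.atTop : Filter ℤ), K ≤ x (n+1) / x (phii τ i₀ n)) → K ≤ d := by
    intro K hK
    exact Filter.le_liminf_of_le (Filter.isCoboundedUnder_ge_of_eventually_le _ hratle1) hK
  -- core inequality
  have hcore : ∀ a : ℝ, 0 < a → a < α → ∀ δ : ℝ, 0 < δ →
      a^2/2 ≤ d * (1 - a - (d - δ)) ∧ 0 < 1 - a - (d - δ) := by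
    intro a ha0 haα δ hδ
    obtain ⟨N₃, hN₃⟩ := Filter.eventually_atTop.1 (hwin a haα)
    obtain ⟨N₄, hN₄⟩ := Filter.eventually_atTop.1 (hd_lb δ hδ)
    obtain ⟨N₅, hN₅⟩ := Filter.eventually_atTop.1 ((hτlim i₀).eventually_ge_atTop N₂)
    set NB : ℤ := max (max N₂ N₃) (max N₄ N₅) with hNB
    have hmain : ∀ n : ℤ, NB ≤ n → a^2/2 * x (phii τ i₀ n) ≤ (1 - a - (d - δ)) * x (n+1) := by
      intro n hn
      have hnN₂ : N₂ ≤ n := by omega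
      have h0n : (0:ℤ) ≤ n := by omega
      have hxhn : 0 < x (phii τ i₀ n) := hx0 _ (le_trans hN₁ (hhge n hnN₂))
      have hxn1 : 0 < x (n+1) := hx0 _ (by omega)
      -- h (n+1) is in the good region
      have hhn1N₂ : N₂ ≤ phii τ i₀ (n+1) :=
        le_trans (hN₅ (n+1) (by omega)) (hτ_le_phii i₀ (n+1) (n+1) (by omega) le_rfl)
      -- construction of m
      have hhm0 : ∃ kk : ℕ, a ≤ ∑ j ∈ Finset.Icc (n+1) (n+1+(kk:ℤ)), p i₀ j := by
        obtain ⟨M₀, hM₀1, hM₀2⟩ := ((hhtop.eventually_ge_atTop (n+2)).and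
          (Filter.eventually_ge_atTop (max (n+2) N₃))).exists
        refine ⟨(M₀ - (n+1)).toNat, ?_⟩
        have hM₀3 : n + 2 ≤ M₀ := le_trans (le_max_left _ _) hM₀2
        have hM₀4 : N₃ ≤ M₀ := le_trans (le_max_right _ _) hM₀2
        have hM₀' : n+1+((M₀ - (n+1)).toNat : ℤ) = M₀ := by
          rw [Int.toNat_of_nonneg (by omega)]; ring
        rw [hM₀']
        have hw := hN₃ M₀ hM₀4
        have hsub : ∑ j ∈ Finset.Ico (phii τ i₀ M₀) M₀, p i₀ j
            ≤ ∑ j ∈ Finset.Icc (n+1) M₀, p i₀ j := by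
          apply Finset.sum_le_sum_of_subset_of_nonneg
          · intro j hj
            rw [Finset.mem_Ico] at hj
            rw [Finset.mem_Icc]
            omega
          · intro j hj _
            rw [Finset.mem_Icc] at hj
            exact hp i₀ j (by omega)
        linarith
      set kk : ℕ := Nat.find hhm0 with hkk
      set mm : ℤ := n+1+(kk:ℤ) with hmm
      have hm1 : a ≤ ∑ j ∈ Finset.Icc (n+1) mm, p i₀ j := Nat.find_spec hhm0
      have hmge : n+1 ≤ mm := by omega
      have hm2 : ∑ j ∈ Finset.Ico (n+1) mm, p i₀ j < a := by
        rcases Nat.eq_zero_or_pos kk with h0 | hposk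
        · have hempty : Finset.Ico (n+1) mm = ∅ := by
            apply Finset.Ico_eq_empty
            omega
          rw [hempty, Finset.sum_empty]
          exact ha0
        · have hlt := Nat.find_min hhm0 (m := kk - 1) (by omega)
          push_neg at hlt
          have hset : Finset.Ico (n+1) mm = Finset.Icc (n+1) (n+1+((kk-1 : ℕ) : ℤ)) := by
            ext j
            simp only [Finset.mem_Ico, Finset.mem_Icc]
            omega
          rw [hset]
          exact hlt
      have hhmle : phii τ i₀ mm ≤ n+1 := by
        by_contra hcon
        push_neg at hcon
        have hw := hN₃ mm (by omega)
        have hsub : ∑ j ∈ Finset.Ico (phii τ i₀ mm) mm, p i₀ j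
            ≤ ∑ j ∈ Finset.Ico (n+1) mm, p i₀ j := by
          apply Finset.sum_le_sum_of_subset_of_nonneg
          · intro j hj
            rw [Finset.mem_Ico] at hj ⊢
            omega
          · intro j hj _
            rw [Finset.mem_Ico] at hj
            exact hp i₀ j (by omega)
        linarith
      have hhjmem : ∀ j, n+1 ≤ j → j ≤ mm → phii τ i₀ (n+1) ≤ phii τ i₀ j ∧ phii τ i₀ j ≤ n+1 := by
        intro j hj hj'
        constructor
        · exact hphii_mono i₀ (n+1) j (by omega) hj
        · exact le_trans (hphii_mono i₀ j mm (by omega) hj') hhmle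
      -- step 1 : outer telescope
      have step1 : ∑ j ∈ Finset.Icc (n+1) mm, (p i₀ j * x (phii τ i₀ j)) ≤ x (n+1) - x (mm+1) := by
        apply telescope_le x _ mm (by omega)
        intro j hj hj'
        have := hsd j (by omega)
        linarith
      -- step 2 : pointwise lower bound for x (phii τ i₀ j)
      have step2 : ∀ j, n+1 ≤ j → j ≤ mm →
          x (n+1) + (a - ∑ i ∈ Finset.Ico (n+1) j, p i₀ i) * x (phii τ i₀ n)
            ≤ x (phii τ i₀ j) := by
        intro j hj hj'
        obtain ⟨hj1, hj2⟩ := hhjmem j hj hj'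
        have ht : ∑ i ∈ Finset.Icc (phii τ i₀ j) n, (p i₀ i * x (phii τ i₀ i))
            ≤ x (phii τ i₀ j) - x (n+1) := by
          apply telescope_le x _ n (by omega)
          intro i hi hi'
          have := hsd i (by omega)
          linarith
        have hterm : (∑ i ∈ Finset.Icc (phii τ i₀ j) n, p i₀ i) * x (phii τ i₀ n)
            ≤ ∑ i ∈ Finset.Icc (phii τ i₀ j) n, (p i₀ i * x (phii τ i₀ i)) := by
          rw [Finset.sum_mul]
          apply Finset.sum_le_sum
          intro i hi
          rw [Finset.mem_Icc] at hi
          have hiN₂ : N₂ ≤ i := by omega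
          have hxhi : x (phii τ i₀ n) ≤ x (phii τ i₀ i) := by
            apply hmono (phii τ i₀ i) (phii τ i₀ n) (hhge i hiN₂)
              (hphii_mono i₀ i n (by omega) hi.2)
          exact mul_le_mul_of_nonneg_left hxhi (hp i₀ i (by omega))
        have hwj := hN₃ j (by omega)
        have hsplit := zsum_Ico_consecutive (fun i => p i₀ i) hj2 hj
        have hIcoIcc : ∑ i ∈ Finset.Ico (phii τ i₀ j) (n+1), p i₀ i
            = ∑ i ∈ Finset.Icc (phii τ i₀ j) n, p i₀ i := by
          rw [zIco_eq_Icc]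
        have hcoeff : a - (∑ i ∈ Finset.Ico (n+1) j, p i₀ i)
            ≤ ∑ i ∈ Finset.Icc (phii τ i₀ j) n, p i₀ i := by
          rw [← hIcoIcc]
          linarith [hsplit, hwj]
        have h6 : (a - (∑ i ∈ Finset.Ico (n+1) j, p i₀ i)) * x (phii τ i₀ n)
            ≤ (∑ i ∈ Finset.Icc (phii τ i₀ j) n, p i₀ i) * x (phii τ i₀ n) :=
          mul_le_mul_of_nonneg_right hcoeff hxhn.le
        linarith
      -- step 3 : summing step 2
      have step3 : a * x (n+1) + a^2/2 * x (phii τ i₀ n)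
          ≤ ∑ j ∈ Finset.Icc (n+1) mm, (p i₀ j * x (phii τ i₀ j)) := by
        have h1 : ∀ j ∈ Finset.Icc (n+1) mm,
            p i₀ j * (x (n+1) + (a - ∑ i ∈ Finset.Ico (n+1) j, p i₀ i) * x (phii τ i₀ n))
              ≤ p i₀ j * x (phii τ i₀ j) := by
          intro j hj
          rw [Finset.mem_Icc] at hj
          exact mul_le_mul_of_nonneg_left (step2 j hj.1 hj.2) (hp i₀ j (by omega))
        have h2 := Finset.sum_le_sum h1
        have h3 : ∑ j ∈ Finset.Icc (n+1) mm,
            (p i₀ j * (x (n+1) + (a - ∑ i ∈ Finset.Ico (n+1) j, p i₀ i) * x (phii τ i₀ n)))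
            = (∑ j ∈ Finset.Icc (n+1) mm, p i₀ j) * x (n+1)
              + (∑ j ∈ Finset.Icc (n+1) mm, p i₀ j * (a - ∑ i ∈ Finset.Ico (n+1) j, p i₀ i))
                * x (phii τ i₀ n) := by
          rw [Finset.sum_mul, Finset.sum_mul, ← Finset.sum_add_distrib]
          apply Finset.sum_congr rfl
          intro j _
          ring
        rw [h3] at h2
        have h4 : a * x (n+1) ≤ (∑ j ∈ Finset.Icc (n+1) mm, p i₀ j) * x (n+1) :=
          mul_le_mul_of_nonneg_right hm1 hxn1.le
        have h5 : a^2/2 ≤ ∑ j ∈ Finset.Icc (n+1) mm,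
            p i₀ j * (a - ∑ i ∈ Finset.Ico (n+1) j, p i₀ i) :=
          sum_weight ha0 hmge (fun j hj hj' => hp i₀ j (by omega)) hm2 hm1
        have h6 : a^2/2 * x (phii τ i₀ n) ≤ (∑ j ∈ Finset.Icc (n+1) mm,
            p i₀ j * (a - ∑ i ∈ Finset.Ico (n+1) j, p i₀ i)) * x (phii τ i₀ n) :=
          mul_le_mul_of_nonneg_right h5 hxhn.le
        linarith
      -- step 4 : x (mm+1) ≥ (d - δ) x (n+1)
      have hxhm : 0 < x (phii τ i₀ mm) := hx0 _ (le_trans hN₁ (hhge mm (by omega)))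
      have hxhm_ge : x (n+1) ≤ x (phii τ i₀ mm) :=
        hmono (phii τ i₀ mm) (n+1) (hhge mm (by omega)) hhmle
      have hratm : d - δ < x (mm+1) / x (phii τ i₀ mm) := hN₄ mm (by omega)
      have step4 : (d - δ) * x (n+1) ≤ x (mm+1) := by
        rcases le_or_gt 0 (d - δ) with hc | hc
        · have h1 : (d-δ) * x (phii τ i₀ mm) < x (mm+1) := by
            rw [lt_div_iff₀ hxhm] at hratm
            linarith
          have h2 : (d-δ) * x (n+1) ≤ (d-δ) * x (phii τ i₀ mm) :=
            mul_le_mul_of_nonneg_left hxhm_ge hc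
          linarith
        · have h1 : (d-δ) * x (n+1) < 0 := mul_neg_of_neg_of_pos hc hxn1
          have h2 : 0 < x (mm+1) := hx0 _ (by omega)
          linarith
      -- assemble
      have hgoal : (1 - a - (d - δ)) * x (n+1)
          = x (n+1) - a * x (n+1) - (d - δ) * x (n+1) := by ring
      rw [hgoal]
      linarith
    -- positivity of the coefficient
    have hxhNB : 0 < x (phii τ i₀ NB) := hx0 _ (le_trans hN₁ (hhge NB (by omega)))
    have hxNB1 : 0 < x (NB+1) := hx0 _ (by omega)
    have hpos_coeff : 0 < 1 - a - (d - δ) := by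
      by_contra hC
      push_neg at hC
      have h1 := hmain NB le_rfl
      have hL : 0 < a^2/2 * x (phii τ i₀ NB) := by positivity
      have hR : (1 - a - (d - δ)) * x (NB+1) ≤ 0 :=
        mul_nonpos_of_nonpos_of_nonneg hC hxNB1.le
      linarith
    constructor
    · have hKd : a^2/2 / (1 - a - (d - δ)) ≤ d := by
        apply hd_from
        filter_upwards [Filter.eventually_ge_atTop NB, Filter.eventually_ge_atTop N₂]
          with n hn hn2
        have h1 := hmain n hn
        have hxh : 0 < x (phii τ i₀ n) := hx0 _ (le_trans hN₁ (hhge n hn2))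
        rw [div_le_div_iff₀ hpos_coeff hxh]
        linarith
      rw [div_le_iff₀ hpos_coeff] at hKd
      linarith
    · exact hpos_coeff
  -- pass to the limit in the core inequality
  have hΔ0 : 0 ≤ 1 - 2 * α - α ^ 2 := by
    have he : (2.7182818283 : ℝ) < Real.exp 1 := Real.exp_one_gt_d9
    have h37 : α ≤ 0.37 := by
      have h1 : 1 / Real.exp 1 ≤ 1 / 2.7182818283 :=
        one_div_le_one_div_of_le (by norm_num) he.le
      have h2 : (1:ℝ) / 2.7182818283 ≤ 0.37 := by norm_num
      linarith
    nlinarith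
  have hquad : d^2 - (1-α)*d + α^2/2 ≤ 0 := by
    have hseq : ∀ k : ℕ, (α - α/((k:ℝ)+2))^2/2
        - d * (1 - (α - α/((k:ℝ)+2)) - (d - 1/((k:ℝ)+1))) ≤ 0 := by
      intro k
      have hk2 : (0:ℝ) < (k:ℝ)+2 := by positivity
      have hfrac : 0 < α/((k:ℝ)+2) := by positivity
      have ha0 : 0 < α - α/((k:ℝ)+2) := by
        rw [sub_pos, div_lt_iff₀ hk2]
        nlinarith
      have haα : α - α/((k:ℝ)+2) < α := by linarith
      have hδp : (0:ℝ) < 1/((k:ℝ)+1) := by positivity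
      have := (hcore _ ha0 haα _ hδp).1
      linarith
    have hatop2 : Filter.Tendsto (fun k : ℕ => ((k:ℝ)+2)) Filter.atTop Filter.atTop :=
      tendsto_atTop_add_const_right _ 2 tendsto_natCast_atTop_atTop
    have hatop1 : Filter.Tendsto (fun k : ℕ => ((k:ℝ)+1)) Filter.atTop Filter.atTop :=
      tendsto_atTop_add_const_right _ 1 tendsto_natCast_atTop_atTop
    have hε : Filter.Tendsto (fun k : ℕ => α/((k:ℝ)+2)) Filter.atTop (nhds 0) := by
      have h2 := hatop2.inv_tendsto_atTop.const_mul α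
      simpa [div_eq_mul_inv] using h2
    have hδt : Filter.Tendsto (fun k : ℕ => 1/((k:ℝ)+1)) Filter.atTop (nhds 0) := by
      have h2 := hatop1.inv_tendsto_atTop.const_mul (1:ℝ)
      simpa [div_eq_mul_inv] using h2
    have h1 : Filter.Tendsto (fun k : ℕ => α - α/((k:ℝ)+2)) Filter.atTop (nhds α) := by
      have hc : Filter.Tendsto (fun _ : ℕ => α) Filter.atTop (nhds α) := tendsto_const_nhds
      simpa using hc.sub hε
    have h2 : Filter.Tendsto (fun k : ℕ => (α - α/((k:ℝ)+2))^2/2) Filter.atTop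
        (nhds (α^2/2)) := (h1.pow 2).div_const 2
    have h3 : Filter.Tendsto (fun k : ℕ => d - 1/((k:ℝ)+1)) Filter.atTop (nhds d) := by
      have hc : Filter.Tendsto (fun _ : ℕ => d) Filter.atTop (nhds d) := tendsto_const_nhds
      simpa using hc.sub hδt
    have h4 : Filter.Tendsto (fun k : ℕ => 1 - (α - α/((k:ℝ)+2)) - (d - 1/((k:ℝ)+1)))
        Filter.atTop (nhds (1 - α - d)) :=
      (tendsto_const_nhds.sub h1).sub h3
    have h5 : Filter.Tendsto (fun k : ℕ => (α - α/((k:ℝ)+2))^2/2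
        - d * (1 - (α - α/((k:ℝ)+2)) - (d - 1/((k:ℝ)+1)))) Filter.atTop
        (nhds (α^2/2 - d * (1 - α - d))) := h2.sub (h4.const_mul d)
    have hlim := le_of_tendsto h5 (Filter.Eventually.of_forall hseq)
    nlinarith [hlim]
  have hdD : (1 - α - Real.sqrt (1 - 2*α - α^2))/2 ≤ d := quad_root hΔ0 (by nlinarith [hquad])
  -- the a_r estimate
  have haR : ∀ r' : ℕ, ∃ M : ℤ, N₂ ≤ M ∧ ∀ k n' : ℤ, M ≤ k → k ≤ n' →
      x n' ≤ aR p τ r' n' k * x k := by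
    intro r'
    induction r' with
    | zero =>
      refine ⟨N₂, le_rfl, ?_⟩
      intro k n' hk hkn'
      have hunfold : aR p τ 0 n' k = ∏ j ∈ Finset.Ico k n', (1 - ∑ l : Fin m, p l j) := rfl
      rw [hunfold]
      apply prod_telescope x _ n' hkn'
      · intro j hj hj'
        have h0j : (0:ℤ) ≤ j := by omega
        have heq := hxeq j h0j
        have hsumle : (∑ l : Fin m, p l j) * x j ≤ ∑ l : Fin m, p l j * x (τ l j) := by
          rw [Finset.sum_mul]
          apply Finset.sum_le_sum
          intro l _
          apply mul_le_mul_of_nonneg_left _ (hp l j h0j)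
          exact hmono (τ l j) j (hτN₂ j (by omega) l) (by have := hτ l j h0j; omega)
        have hrw : (1 - ∑ l : Fin m, p l j) * x j = x j - (∑ l : Fin m, p l j) * x j := by
          ring
        rw [hrw]
        linarith
      · intro j hj hj'
        have := hsum j (by omega)
        linarith
    | succ r' ih =>
      obtain ⟨M, hMN₂, hM⟩ := ih
      have hevM : ∀ᶠ s in (Filter.atTop : Filter ℤ), ∀ l : Fin m, M ≤ τ l s :=
        Filter.eventually_all.2 fun l => (hτlim l).eventually_ge_atTop M
      obtain ⟨T', hT'⟩ := Filter.eventually_atTop.1 hevM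
      refine ⟨max T' N₂, by omega, ?_⟩
      intro k n' hk hkn'
      have hunfold : aR p τ (r'+1) n' k
          = ∏ j ∈ Finset.Ico k n', (1 - ∑ l : Fin m, p l j * (aR p τ r' j (τ l j))⁻¹) := rfl
      rw [hunfold]
      have hstep : ∀ j, k ≤ j → j < n' →
          x (j+1) ≤ (1 - ∑ l : Fin m, p l j * (aR p τ r' j (τ l j))⁻¹) * x j := by
        intro j hj hj'
        have h0j : (0:ℤ) ≤ j := by omega
        have hxj : 0 < x j := hx0 j (by omega)
        have heq := hxeq j h0j
        have hsumle : (∑ l : Fin m, p l j * (aR p τ r' j (τ l j))⁻¹) * x j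
            ≤ ∑ l : Fin m, p l j * x (τ l j) := by
          rw [Finset.sum_mul]
          apply Finset.sum_le_sum
          intro l _
          have hτlM : M ≤ τ l j := hT' j (by omega) l
          have hIH := hM (τ l j) j hτlM (by have := hτ l j h0j; omega)
          have hxτ : 0 < x (τ l j) := hx0 _ (by omega)
          have haRpos : 0 < aR p τ r' j (τ l j) := by
            by_contra hc
            push_neg at hc
            nlinarith
          have hinv : (aR p τ r' j (τ l j))⁻¹ * x j ≤ x (τ l j) := by
            rw [inv_mul_le_iff₀ haRpos]
            linarith [hIH]
          calc p l j * (aR p τ r' j (τ l j))⁻¹ * x j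
              = p l j * ((aR p τ r' j (τ l j))⁻¹ * x j) := by ring
            _ ≤ p l j * x (τ l j) := mul_le_mul_of_nonneg_left hinv (hp l j h0j)
        have hrw : (1 - ∑ l : Fin m, p l j * (aR p τ r' j (τ l j))⁻¹) * x j
            = x j - (∑ l : Fin m, p l j * (aR p τ r' j (τ l j))⁻¹) * x j := by ring
        rw [hrw]
        linarith
      apply prod_telescope x _ n' hkn' hstep
      intro j hj hj'
      have hxj : 0 < x j := hx0 j (by omega)
      have hxj1 : 0 < x (j+1) := hx0 (j+1) (by omega)
      have hs := hstep j hj hj'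
      by_contra hc
      push_neg at hc
      nlinarith
  -- the bound on the limsup sum
  obtain ⟨M, hMN₂, hM⟩ := haR r
  have hevM : ∀ᶠ s in (Filter.atTop : Filter ℤ), ∀ l : Fin m, M ≤ τ l s :=
    Filter.eventually_all.2 fun l => (hτlim l).eventually_ge_atTop M
  obtain ⟨T', hT'⟩ := Filter.eventually_atTop.1 hevM
  set S : ℤ → ℝ := fun n : ℤ =>
    ∑ j ∈ Finset.Icc (phi τ n) n, ∑ i : Fin m, p i j * (aR p τ r (phi τ n) (τ i j))⁻¹ with hS
  have hSbound : ∀ᶠ n in (Filter.atTop : Filter ℤ),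
      0 ≤ S n ∧ S n ≤ 1 - x (n+1) / x (phii τ i₀ n) := by
    filter_upwards [hphitop.eventually_ge_atTop (max T' N₂), Filter.eventually_ge_atTop N₂]
      with n hg hn2
    have hgT : T' ≤ phi τ n := by omega
    have hgN₂ : N₂ ≤ phi τ n := by omega
    have hgle : phi τ n ≤ n - 1 := hphi_le n (by omega)
    have hxg : 0 < x (phi τ n) := hx0 _ (by omega)
    have hxn1 : 0 < x (n+1) := hx0 _ (by omega)
    have hxhn : 0 < x (phii τ i₀ n) := hx0 _ (le_trans hN₁ (hhge n hn2))
    have hτbound : ∀ i : Fin m, ∀ j, phi τ n ≤ j → j ≤ n → M ≤ τ i j ∧ τ i j ≤ phi τ n := by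
      intro i j hj hj'
      refine ⟨hT' j (by omega) i, ?_⟩
      calc τ i j ≤ phii τ i j := hτ_le_phii i j j (by omega) le_rfl
        _ ≤ phii τ i n := hphii_mono i j n (by omega) hj'
        _ ≤ phi τ n := hphii_le_phi i n
    have haRterm : ∀ i : Fin m, ∀ j, phi τ n ≤ j → j ≤ n →
        0 < aR p τ r (phi τ n) (τ i j) ∧
        x (phi τ n) ≤ aR p τ r (phi τ n) (τ i j) * x (τ i j) := by
      intro i j hj hj'
      obtain ⟨hτM, hτg⟩ := hτbound i j hj hj'
      have hIH := hM (τ i j) (phi τ n) hτM hτg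
      have hxτ : 0 < x (τ i j) := hx0 _ (by omega)
      refine ⟨?_, hIH⟩
      by_contra hc
      push_neg at hc
      nlinarith
    have hident : ∑ j ∈ Finset.Icc (phi τ n) n, (∑ i : Fin m, p i j * x (τ i j))
        = x (phi τ n) - x (n+1) := by
      apply telescope_eq x _ (by omega)
      intro j hj hj'
      have := hxeq j (by omega)
      linarith
    have hSle : S n ≤ (∑ j ∈ Finset.Icc (phi τ n) n, (∑ i : Fin m, p i j * x (τ i j)))
        / x (phi τ n) := by
      rw [Finset.sum_div]
      apply Finset.sum_le_sum
      intro j hj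
      rw [Finset.mem_Icc] at hj
      rw [Finset.sum_div]
      apply Finset.sum_le_sum
      intro i _
      obtain ⟨haRpos, hIH⟩ := haRterm i j hj.1 hj.2
      obtain ⟨hτM, hτg⟩ := hτbound i j hj.1 hj.2
      have hxτ : 0 < x (τ i j) := hx0 _ (by omega)
      have hinv : (aR p τ r (phi τ n) (τ i j))⁻¹ ≤ x (τ i j) / x (phi τ n) := by
        rw [inv_eq_one_div, div_le_div_iff₀ haRpos hxg]
        nlinarith [hIH]
      calc p i j * (aR p τ r (phi τ n) (τ i j))⁻¹ ≤ p i j * (x (τ i j) / x (phi τ n)) :=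
            mul_le_mul_of_nonneg_left hinv (hp i j (by omega))
        _ = p i j * x (τ i j) / x (phi τ n) := by ring
    constructor
    · apply Finset.sum_nonneg
      intro j hj
      rw [Finset.mem_Icc] at hj
      apply Finset.sum_nonneg
      intro i _
      obtain ⟨haRpos, _⟩ := haRterm i j hj.1 hj.2
      exact mul_nonneg (hp i j (by omega)) (inv_nonneg.2 haRpos.le)
    · rw [hident] at hSle
      have h1 : (x (phi τ n) - x (n+1)) / x (phi τ n) = 1 - x (n+1) / x (phi τ n) := by
        field_simp
      have hxgle : x (phi τ n) ≤ x (phii τ i₀ n) :=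
        hmono (phii τ i₀ n) (phi τ n) (hhge n hn2) (hphii_le_phi i₀ n)
      have h2 : x (n+1) / x (phii τ i₀ n) ≤ x (n+1) / x (phi τ n) := by
        rw [div_le_div_iff₀ hxhn hxg]
        exact mul_le_mul_of_nonneg_left hxgle hxn1.le
      rw [h1] at hSle
      linarith
  -- final contradiction
  set D : ℝ := (1 - α - Real.sqrt (1 - 2 * α - α ^ 2)) / 2 with hD
  set L : ℝ := Filter.limsup S Filter.atTop with hL
  have hDd : D ≤ d := by
    rw [hD]
    exact hdD
  have hcond' : 1 - D < L := hcond
  have hδL : 0 < (L - (1 - D))/2 := by linarith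
  have hev : ∀ᶠ n in (Filter.atTop : Filter ℤ), S n ≤ 1 - D + (L - (1 - D))/2 := by
    filter_upwards [hSbound, hd_lb _ hδL] with n h1 h2
    have := h1.2
    linarith
  have hcob : Filter.IsCoboundedUnder (· ≤ ·) (Filter.atTop : Filter ℤ) S :=
    Filter.isCoboundedUnder_le_of_eventually_le _ (hSbound.mono (fun n hn => hn.1))
  have hfin : L ≤ 1 - D + (L - (1 - D))/2 := Filter.limsup_le_of_le hcob hev
  linarith

/-- Theorem 2.5: if `τ_i(n) → ∞`, `∑_i p_i(n) < 1` for `n ≥ 0`,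
`α = min_i liminf_{n→∞} ∑_{j=φ_i(n)}^{n-1} p_i(j)` satisfies `0 < α ≤ 1/e`, and for some
`r ∈ ℕ`, `limsup_{n→∞} ∑_{j=φ(n)}^{n} ∑_i p_i(j) a_r(φ(n),τ_i(j))⁻¹ >
1 - (1 - α - √(1 - 2α - α²))/2`, then every solution of the retarded equation oscillates. -/
theorem stmt_4 {m : ℕ} [NeZero m] (p : Fin m → ℤ → ℝ) (τ : Fin m → ℤ → ℤ)
    (hp : ∀ i : Fin m, ∀ n : ℤ, 0 ≤ n → 0 ≤ p i n)
    (hτ : ∀ i : Fin m, ∀ n : ℤ, 0 ≤ n → τ i n ≤ n - 1)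
    (hτlim : ∀ i : Fin m, Filter.Tendsto (τ i) Filter.atTop Filter.atTop)
    (hsum : ∀ n : ℤ, 0 ≤ n → ∑ i : Fin m, p i n < 1)
    (α : ℝ)
    (hα : α = Finset.univ.inf' Finset.univ_nonempty (fun i : Fin m =>
        Filter.liminf (fun n : ℤ => ∑ j ∈ Finset.Ico (phii τ i n) n, p i j) Filter.atTop))
    (hα0 : 0 < α) (hα1 : α ≤ 1 / Real.exp 1)
    (r : ℕ)
    (hcond : 1 - (1 - α - Real.sqrt (1 - 2 * α - α ^ 2)) / 2 <
      Filter.limsup (fun n : ℤ =>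
        ∑ j ∈ Finset.Icc (phi τ n) n, ∑ i : Fin m, p i j * (aR p τ r (phi τ n) (τ i j))⁻¹)
      Filter.atTop)
    (x : ℤ → ℝ)
    (hxeq : ∀ n : ℤ, 0 ≤ n → x (n + 1) - x n + ∑ i : Fin m, p i n * x (τ i n) = 0) :
    (¬ ∃ N : ℤ, ∀ n ≥ N, 0 < x n) ∧ (¬ ∃ N : ℤ, ∀ n ≥ N, x n < 0) := by
  constructor
  · rintro ⟨N, hN⟩
    exact noPos p τ hp hτ hτlim hsum α hα hα0 hα1 r hcond x hxeq N hN
  · rintro ⟨N, hN⟩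
    refine noPos p τ hp hτ hτlim hsum α hα hα0 hα1 r hcond (fun n => - x n) ?_ N ?_
    · intro n hn
      have := hxeq n hn
      have hsum2 : ∑ i : Fin m, p i n * -x (τ i n) = -∑ i : Fin m, p i n * x (τ i n) := by
        rw [← Finset.sum_neg_distrib]
        apply Finset.sum_congr rfl
        intro i _
        ring
      rw [hsum2]
      show -x (n+1) - -x n + -∑ i : Fin m, p i n * x (τ i n) = 0
      linarith
    · intro n hn
      have := hN n hn
      show 0 < -x n
      linarith
end

section
/- Suppose there exists a strictly increasing sequence of positive integers (θ(n))_{n∈ℕ} such that Σ_{i=1}^m p_i(θ(n)) ≥ 1 for all n ∈ ℕ. Then every solution of (E_A) oscillates. -/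
lemma stmt_5_aux {m : ℕ} (p : Fin m → ℕ → ℝ) (σ : Fin m → ℕ → ℕ)
    (hp : ∀ i : Fin m, ∀ n : ℕ, 0 ≤ p i n)
    (hσ : ∀ i : Fin m, ∀ n : ℕ, 1 ≤ n → n + 1 ≤ σ i n)
    (θ : ℕ → ℕ) (hθmono : StrictMono θ)
    (hθsum : ∀ n : ℕ, 1 ≤ ∑ i : Fin m, p i (θ n))
    (x : ℕ → ℝ)
    (hxeq : ∀ n : ℕ, 1 ≤ n → x n - x (n - 1) - ∑ i : Fin m, p i n * x (σ i n) = 0) :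
    ¬ ∃ N : ℕ, ∀ n ≥ N, 0 < x n := by
  rintro ⟨N, hN⟩
  set K := max N 1 with hK
  -- monotonicity from K on
  have mono : ∀ a, K ≤ a → ∀ d, x a ≤ x (a + d) := by
    intro a ha d
    induction d with
    | zero => simp
    | succ d ih =>
      refine le_trans ih ?_
      have h1 : 1 ≤ a + d + 1 := by omega
      have heq := hxeq (a + d + 1) h1
      have hsub : a + d + 1 - 1 = a + d := by omega
      rw [hsub] at heq
      have hsum : 0 ≤ ∑ i : Fin m, p i (a + d + 1) * x (σ i (a + d + 1)) := by
        refine Finset.sum_nonneg fun i _ => mul_nonneg (hp i _) (le_of_lt (hN _ ?_))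
        have := hσ i (a + d + 1) h1
        omega
      show x (a + d) ≤ x (a + d + 1)
      linarith
  have hθk : ∀ k, k ≤ θ k := fun k => hθmono.le_apply
  set n := θ (K + 1) with hn
  have hnK : K + 1 ≤ n := hθk (K + 1)
  have h1 : 1 ≤ n := by omega
  have heq := hxeq n h1
  have hxn : 0 < x n := hN n (by omega)
  have hxn' : 0 < x (n - 1) := hN (n - 1) (by omega)
  have hterm : ∀ i : Fin m, p i n * x n ≤ p i n * x (σ i n) := by
    intro i
    refine mul_le_mul_of_nonneg_left ?_ (hp i n)
    have hσi := hσ i n h1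
    have : σ i n = n + (σ i n - n) := by omega
    rw [this]
    exact mono n (by omega) _
  have hsum : (∑ i : Fin m, p i n) * x n ≤ ∑ i : Fin m, p i n * x (σ i n) := by
    rw [Finset.sum_mul]
    exact Finset.sum_le_sum fun i _ => hterm i
  have h1s : 1 ≤ ∑ i : Fin m, p i n := hθsum (K + 1)
  nlinarith [hsum, h1s, hxn, hxn']

/-- Theorem 2.3′: if there is a (strictly increasing) subsequence `θ(n)` of positive
integers with `∑_{i=1}^m p_i(θ(n)) ≥ 1` for all `n`, then every solution of the advanced
equation `∇x(n) - ∑_i p_i(n) x(σ_i(n)) = 0` (for `n ≥ 1`) oscillates. -/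
theorem stmt_5 {m : ℕ} (hm : 0 < m) (p : Fin m → ℕ → ℝ) (σ : Fin m → ℕ → ℕ)
    (hp : ∀ i : Fin m, ∀ n : ℕ, 0 ≤ p i n)
    (hσ : ∀ i : Fin m, ∀ n : ℕ, 1 ≤ n → n + 1 ≤ σ i n)
    (θ : ℕ → ℕ) (hθmono : StrictMono θ) (hθpos : ∀ n : ℕ, 0 < θ n)
    (hθsum : ∀ n : ℕ, 1 ≤ ∑ i : Fin m, p i (θ n))
    (x : ℕ → ℝ)
    (hxeq : ∀ n : ℕ, 1 ≤ n → x n - x (n - 1) - ∑ i : Fin m, p i n * x (σ i n) = 0) :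
    (¬ ∃ N : ℕ, ∀ n ≥ N, 0 < x n) ∧ (¬ ∃ N : ℕ, ∀ n ≥ N, x n < 0) := by
  constructor
  · exact stmt_5_aux p σ hp hσ θ hθmono hθsum x hxeq
  · rintro ⟨N, hN⟩
    refine stmt_5_aux p σ hp hσ θ hθmono hθsum (fun k => -x k) ?_ ⟨N, fun n hn => by
      simpa using hN n hn⟩
    intro n hn
    have := hxeq n hn
    simp only [mul_neg]
    rw [Finset.sum_neg_distrib]
    linarith [hxeq n hn]
end

section
/- Assume that for each 1 ≤ i ≤ m there exists a positive integer M_i such that n − τ_i(n) ≤ M_i for all n ≥ 0, and that for each k = 1, …, m, liminf_{n→∞} Σ_{i=1}^m Σ_{j=τ_k(n)}^{n−1} p_i(j) > (M_k/(M_k+1))^{M_k+1}. Then every solution of (E_R) oscillates. -/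
open Finset

/-- AM-GM for a product over a finset. -/
lemma amgm_prod (s : Finset ℤ) (z : ℤ → ℝ) (hz : ∀ j ∈ s, 0 ≤ z j) (L : ℕ)
    (hL : s.card = L) (hL0 : L ≠ 0) :
    ∏ j ∈ s, z j ≤ ((∑ j ∈ s, z j) / L) ^ L := by
  have hLpos : (0:ℝ) < L := by exact_mod_cast Nat.pos_of_ne_zero hL0
  have hw : ∑ _j ∈ s, (L:ℝ)⁻¹ = 1 := by
    rw [Finset.sum_const, hL, nsmul_eq_mul]
    field_simp
  have geo := Real.geom_mean_le_arith_mean_weighted s (fun _ => (L:ℝ)⁻¹) z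
    (fun i _ => by positivity) hw hz
  have hsum : ∑ i ∈ s, (L:ℝ)⁻¹ * z i = (∑ j ∈ s, z j) / L := by
    rw [← Finset.mul_sum]; ring
  rw [hsum] at geo
  have hprod : ∏ j ∈ s, z j = (∏ j ∈ s, z j ^ ((L:ℝ)⁻¹)) ^ L := by
    rw [← Finset.prod_pow]
    refine Finset.prod_congr rfl fun j hj => ?_
    rw [← Real.rpow_natCast (z j ^ ((L:ℝ)⁻¹)) L, ← Real.rpow_mul (hz j hj),
      inv_mul_cancel₀ (ne_of_gt hLpos), Real.rpow_one]
  rw [hprod]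
  exact pow_le_pow_left₀ (Finset.prod_nonneg fun j hj => Real.rpow_nonneg (hz j hj) _) geo L

lemma core1 (L : ℕ) (hL : 1 ≤ L) (t : ℝ) (ht0 : 0 ≤ t) (ht1 : t ≤ 1) :
    (L:ℝ) * (1 - t) * t ^ L ≤ ((L:ℝ) / (L + 1)) ^ (L + 1) := by
  set l : ℝ := (L:ℝ) with hl
  have hl1 : (1:ℝ) ≤ l := by rw [hl]; exact_mod_cast hL
  have hl0 : (0:ℝ) < l := by linarith
  have hl0' : (0:ℝ) < l + 1 := by linarith
  have h1 : t ^ L ≤ (l / (l+1)) ^ L * Real.exp ((l+1)*t - l) := by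
    have hid : t = (l/(l+1)) * ((l+1)*t/l) := by field_simp
    have hxe : (l+1)*t/l ≤ Real.exp ((l+1)*t/l - 1) := by
      have := Real.add_one_le_exp ((l+1)*t/l - 1)
      linarith
    have hb : ((l+1)*t/l) ^ L ≤ Real.exp ((l+1)*t/l - 1) ^ L :=
      pow_le_pow_left₀ (by positivity) hxe L
    calc t ^ L = (l/(l+1))^L * ((l+1)*t/l)^L := by rw [← mul_pow, ← hid]
      _ ≤ (l/(l+1))^L * Real.exp ((l+1)*t/l - 1) ^ L :=
          mul_le_mul_of_nonneg_left hb (by positivity)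
      _ = (l/(l+1))^L * Real.exp ((l+1)*t - l) := by
          rw [← Real.exp_nat_mul]
          congr 1
          rw [← hl]
          field_simp
  have h2 : (l+1) * (1-t) * Real.exp ((l+1)*t - l) ≤ 1 := by
    set s : ℝ := (l+1)*(1-t) with hs
    have hs0 : 0 ≤ s := by nlinarith
    have he : (l+1)*t - l = 1 - s := by rw [hs]; ring
    rw [he]
    have h3 : s ≤ Real.exp (s - 1) := by
      have := Real.add_one_le_exp (s-1); linarith
    calc s * Real.exp (1 - s) ≤ Real.exp (s-1) * Real.exp (1-s) :=
          mul_le_mul_of_nonneg_right h3 (Real.exp_nonneg _)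
      _ = 1 := by rw [← Real.exp_add]; norm_num
  calc l * (1-t) * t^L ≤ l * (1-t) * ((l / (l+1)) ^ L * Real.exp ((l+1)*t - l)) :=
        mul_le_mul_of_nonneg_left h1 (by nlinarith)
    _ = (l/(l+1))^L * (l/(l+1)) * ((l+1)*(1-t)*Real.exp ((l+1)*t - l)) := by
        field_simp
    _ ≤ (l/(l+1))^L * (l/(l+1)) * 1 :=
        mul_le_mul_of_nonneg_left h2 (by positivity)
    _ = (l/(l+1))^(L+1) := by rw [mul_one, pow_succ]

lemma core2_step (n : ℕ) (hn : 1 ≤ n) :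
    ((n:ℝ) / ((n:ℝ) + 1)) ^ (n + 1) ≤ (((n:ℝ) + 1) / ((n:ℝ) + 2)) ^ (n + 2) := by
  set v : ℝ := (n:ℝ) with hv
  have hv1 : (1:ℝ) ≤ v := by rw [hv]; exact_mod_cast hn
  have hv0 : (0:ℝ) < v := by linarith
  set e : ℝ := 1/(v*(v+2)) with hedef
  have he0 : (0:ℝ) ≤ e := by positivity
  have bern : 1 + ((n:ℝ)+1) * e ≤ (1+e)^(n+1) := by
    have := one_add_mul_le_pow (a := e) (by linarith) (n+1)
    push_cast at this ⊢
    convert this using 3 <;> push_cast <;> ring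
  have hkey : (v+2)/(v+1) ≤ (1+e)^(n+1) := by
    refine le_trans ?_ bern
    have hveq : ((n:ℝ)+1) = v + 1 := by rw [hv]
    rw [hveq]
    have hdiff : 1 + (v+1)*e - (v+2)/(v+1) = 1/(v*(v+2)*(v+1)) := by
      rw [hedef]; field_simp; ring
    have hpos : (0:ℝ) < 1/(v*(v+2)*(v+1)) := by positivity
    linarith
  have hfact : ((v+1)/(v+2)) = (v/(v+1)) * (1+e) := by
    rw [hedef]; field_simp; ring
  have h1 : 1 ≤ (1+e)^(n+1) * ((v+1)/(v+2)) := by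
    have h2 : ((v+2)/(v+1)) * ((v+1)/(v+2)) = 1 := by field_simp
    calc (1:ℝ) = (v+2)/(v+1) * ((v+1)/(v+2)) := h2.symm
      _ ≤ (1+e)^(n+1) * ((v+1)/(v+2)) :=
          mul_le_mul_of_nonneg_right hkey (by positivity)
  calc (v/(v+1))^(n+1) = (v/(v+1))^(n+1) * 1 := (mul_one _).symm
    _ ≤ (v/(v+1))^(n+1) * ((1+e)^(n+1) * ((v+1)/(v+2))) :=
        mul_le_mul_of_nonneg_left h1 (by positivity)
    _ = ((v+1)/(v+2))^(n+2) := by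
        rw [pow_succ ((v+1)/(v+2)) (n+1), hfact, mul_pow]
        ring

lemma core2_s9 (L M : ℕ) (hL : 1 ≤ L) (hLM : L ≤ M) :
    ((L:ℝ) / ((L:ℝ) + 1)) ^ (L + 1) ≤ ((M:ℝ) / ((M:ℝ) + 1)) ^ (M + 1) := by
  induction M, hLM using Nat.le_induction with
  | base => exact le_refl _
  | succ n hn ih =>
    refine le_trans ih ?_
    have h := core2_step n (le_trans hL hn)
    have e1 : ((n + 1 : ℕ):ℝ) = (n:ℝ) + 1 := by push_cast; ring
    rw [e1]
    have e2 : (n:ℝ) + 1 + 1 = (n:ℝ) + 2 := by ring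
    rw [e2]
    exact h

lemma no_pos {m : ℕ} (hm : 0 < m) (p : Fin m → ℤ → ℝ) (τ : Fin m → ℤ → ℤ)
    (hp : ∀ i : Fin m, ∀ n : ℤ, 0 ≤ n → 0 ≤ p i n)
    (hτ : ∀ i : Fin m, ∀ n : ℤ, 0 ≤ n → τ i n ≤ n - 1)
    (M : Fin m → ℕ) (hMpos : ∀ i : Fin m, 0 < M i)
    (hM : ∀ i : Fin m, ∀ n : ℤ, 0 ≤ n → n - τ i n ≤ (M i : ℤ))
    (hcond : ∀ k : Fin m,
      ((M k : ℝ) / (M k + 1)) ^ (M k + 1) <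
        Filter.liminf (fun n : ℤ => ∑ i : Fin m, ∑ j ∈ Finset.Ico (τ k n) n, p i j)
          Filter.atTop)
    (x : ℤ → ℝ)
    (hxeq : ∀ n : ℤ, 0 ≤ n → x (n + 1) - x n + ∑ i : Fin m, p i n * x (τ i n) = 0)
    (N : ℤ) (hN : ∀ n, N ≤ n → 0 < x n) : False := by
  classical
  have hfin : Nonempty (Fin m) := ⟨⟨0, hm⟩⟩
  have hne : (Finset.univ : Finset (Fin m)).Nonempty := Finset.univ_nonempty
  set N0 : ℤ := max N 0 with hN0
  have hN0nonneg : (0:ℤ) ≤ N0 := le_max_right _ _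
  have hpos : ∀ n, N0 ≤ n → 0 < x n := fun n hn => hN n (le_trans (le_max_left _ _) hn)
  set Mb : ℕ := 1 + ∑ i, M i with hMbd
  have hMble : ∀ i, M i ≤ Mb := fun i =>
    le_trans (Finset.single_le_sum (f := M) (fun j _ => Nat.zero_le _) (Finset.mem_univ i))
      (Nat.le_add_left _ _)
  set Q : ℤ → ℝ := fun j => ∑ i, p i j with hQ
  have heq : ∀ n:ℤ, 0 ≤ n → x (n+1) = x n - ∑ i, p i n * x (τ i n) := by
    intro n hn; have := hxeq n hn; linarith
  set c : Fin m → ℝ := fun k => ((M k : ℝ) / (M k + 1)) ^ (M k + 1) with hc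
  have hcpos : ∀ k, 0 < c k := by
    intro k
    have h1 : (0:ℝ) < (M k:ℝ) := by exact_mod_cast hMpos k
    rw [hc]; positivity
  -- extract α from the liminf condition
  have hexists : ∀ k : Fin m, ∃ a : ℝ, c k < a ∧ ∃ N2 : ℤ, ∀ n, N2 ≤ n →
      a ≤ ∑ i, ∑ j ∈ Finset.Ico (τ k n) n, p i j := by
    intro k
    have hlim := hcond k
    rw [Filter.liminf_eq] at hlim
    have hSne : {a : ℝ | ∀ᶠ n in Filter.atTop,
        a ≤ (fun n : ℤ => ∑ i, ∑ j ∈ Finset.Ico (τ k n) n, p i j) n}.Nonempty := by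
      by_contra h
      rw [Set.not_nonempty_iff_eq_empty] at h
      rw [h, Real.sSup_empty] at hlim
      exact absurd hlim (not_lt.mpr (le_of_lt (hcpos k)))
    obtain ⟨a, haS, hca⟩ := exists_lt_of_lt_csSup hSne hlim
    exact ⟨a, hca, Filter.eventually_atTop.mp haS⟩
  choose α hcα N2 hN2 using hexists
  have hα0 : ∀ k, 0 < α k := fun k => lt_trans (hcpos k) (hcα k)
  set δ : Fin m → ℝ := fun k => 1 - c k / α k with hδ
  have hδpos : ∀ k, 0 < δ k := by
    intro k
    have := (div_lt_one (hα0 k)).mpr (hcα k)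
    simp only [hδ]; linarith
  set δmin : ℝ := Finset.univ.inf' hne δ with hδm
  have hδmin_pos : 0 < δmin := by
    rw [hδm, Finset.lt_inf'_iff]
    exact fun k _ => hδpos k
  have hδmin_le : ∀ k, δmin ≤ δ k := fun k => Finset.inf'_le _ (Finset.mem_univ k)
  set N2max : ℤ := Finset.univ.sup' hne N2 with hN2m
  have hN2le : ∀ k, N2 k ≤ N2max := fun k => Finset.le_sup' _ (Finset.mem_univ k)
  -- monotonicity
  have hstep : ∀ n:ℤ, N0 + (Mb:ℤ) ≤ n → x (n+1) ≤ x n := by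
    intro n hn
    have hn0 : (0:ℤ) ≤ n := by omega
    rw [heq n hn0]
    have hsum : 0 ≤ ∑ i, p i n * x (τ i n) := by
      refine Finset.sum_nonneg fun i _ => mul_nonneg (hp i n hn0) (le_of_lt (hpos _ ?_))
      have h1 := hM i n hn0
      have h2 : (M i : ℤ) ≤ (Mb : ℤ) := by exact_mod_cast hMble i
      omega
    linarith
  have hmono : ∀ s t:ℤ, N0 + (Mb:ℤ) ≤ s → s ≤ t → x t ≤ x s := by
    intro s t hs
    exact Int.le_induction (motive := fun u _ => x u ≤ x s) (le_refl _)
      (fun b hb ih => le_trans (hstep b (le_trans hs hb)) ih) t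
  -- the key window estimate
  have hwin : ∀ lam : ℝ, 1 ≤ lam → ∀ N' : ℤ, N0 + (Mb:ℤ) ≤ N' →
      (∀ i : Fin m, ∀ n : ℤ, N' ≤ n → lam * x n ≤ x (τ i n)) →
      ∀ k : Fin m, ∀ n : ℤ, max N' N2max + (Mb:ℤ) ≤ n →
      (lam + δmin) * x n ≤ x (τ k n) ∧ lam * α k < (M k : ℝ) := by
    intro lam hlam N' hN' hgood k n hn
    have hN'0 : (0:ℤ) ≤ N' := by omega
    have hn0 : (0:ℤ) ≤ n := by
      have := le_max_left N' N2max; omega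
    set a : ℤ := τ k n with ha
    have hMk := hM k n hn0
    have hMkb : (M k : ℤ) ≤ (Mb : ℤ) := by exact_mod_cast hMble k
    have haN' : N' ≤ a := by
      have := le_max_left N' N2max; omega
    have ha0 : (0:ℤ) ≤ a := le_trans hN'0 haN'
    have han : a ≤ n - 1 := hτ k n hn0
    have hwindow_n : N2 k ≤ n := by
      have h1 := hN2le k
      have h2 := le_max_right N' N2max
      omega
    have hz : ∀ j, a ≤ j → j < n → x (j+1) ≤ (1 - lam * Q j) * x j ∧ 0 < 1 - lam * Q j := by
      intro j hja hjn
      have hj0 : (0:ℤ) ≤ j := le_trans ha0 hja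
      have hjN' : N' ≤ j := le_trans haN' hja
      have hxj : 0 < x j := hpos j (by omega)
      have hsum_ge : lam * Q j * x j ≤ ∑ i, p i j * x (τ i j) := by
        have h1 : lam * Q j * x j = ∑ i, p i j * (lam * x j) := by
          simp only [hQ, Finset.mul_sum, Finset.sum_mul]
          exact Finset.sum_congr rfl fun i _ => by ring
        rw [h1]
        exact Finset.sum_le_sum fun i _ =>
          mul_le_mul_of_nonneg_left (hgood i j hjN') (hp i j hj0)
      have hxj1 : x (j+1) ≤ (1 - lam*Q j) * x j := by
        rw [heq j hj0]
        have : (1 - lam*Q j)*x j = x j - lam*Q j * x j := by ring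
        linarith
      have hzpos : 0 < 1 - lam * Q j := by
        have hxj1pos : 0 < x (j+1) := hpos (j+1) (by omega)
        by_contra h
        push_neg at h
        nlinarith
      exact ⟨hxj1, hzpos⟩
    have htel : ∀ t:ℤ, a ≤ t → t ≤ n →
        x t ≤ (∏ j ∈ Finset.Ico a t, (1 - lam * Q j)) * x a := by
      refine fun t => Int.le_induction
        (motive := fun u _ => u ≤ n → x u ≤ (∏ j ∈ Finset.Ico a u, (1 - lam * Q j)) * x a) ?_ ?_ t
      · intro _
        simp
      · intro b hb ih hbn
        have hbn' : b < n := by omega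
        have ih' := ih (by omega)
        have hzb := hz b hb hbn'
        have hIco : Finset.Ico a (b+1) = insert b (Finset.Ico a b) := by
          ext d; simp only [Finset.mem_Ico, Finset.mem_insert]; omega
        rw [hIco, Finset.prod_insert (by simp)]
        calc x (b+1) ≤ (1 - lam*Q b) * x b := hzb.1
          _ ≤ (1 - lam*Q b) * ((∏ j ∈ Finset.Ico a b, (1 - lam*Q j)) * x a) :=
              mul_le_mul_of_nonneg_left ih' (le_of_lt hzb.2)
          _ = (1-lam*Q b) * (∏ j ∈ Finset.Ico a b, (1 - lam*Q j)) * x a := by ring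
    set L : ℕ := (n - a).toNat with hLdef
    have hL1 : 1 ≤ L := by omega
    have hLM : L ≤ M k := by omega
    have hcard : (Finset.Ico a n).card = L := Int.card_Ico a n
    have hLR : (0:ℝ) < (L:ℝ) := by exact_mod_cast Nat.lt_of_lt_of_le Nat.zero_lt_one hL1
    set Ssum : ℝ := ∑ j ∈ Finset.Ico a n, Q j with hSsum
    have hSge : α k ≤ Ssum := by
      calc α k ≤ ∑ i, ∑ j ∈ Finset.Ico a n, p i j := hN2 k n hwindow_n
        _ = ∑ j ∈ Finset.Ico a n, ∑ i, p i j := Finset.sum_comm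
        _ = Ssum := by rw [hSsum]
    have hsum_z : ∑ j ∈ Finset.Ico a n, (1 - lam * Q j) = (L:ℝ) - lam * Ssum := by
      rw [Finset.sum_sub_distrib, Finset.sum_const, hcard, nsmul_eq_mul, mul_one,
        hSsum, Finset.mul_sum]
    have hIcone : (Finset.Ico a n).Nonempty := by
      rw [Finset.nonempty_Ico]; omega
    have hsum_pos : 0 < (L:ℝ) - lam * Ssum := by
      rw [← hsum_z]
      exact Finset.sum_pos
        (fun j hj => (hz j (Finset.mem_Ico.mp hj).1 (Finset.mem_Ico.mp hj).2).2) hIcone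
    have hlamS : lam * α k < (M k:ℝ) := by
      have h1 : lam * α k ≤ lam * Ssum := mul_le_mul_of_nonneg_left hSge (by linarith)
      have h2 : (L:ℝ) ≤ (M k:ℝ) := by exact_mod_cast hLM
      linarith
    refine ⟨?_, hlamS⟩
    have hprod_le : ∏ j ∈ Finset.Ico a n, (1 - lam*Q j) ≤ (((L:ℝ) - lam*Ssum)/L)^L := by
      have h := amgm_prod (Finset.Ico a n) (fun j => 1 - lam*Q j)
        (fun j hj => le_of_lt (hz j (Finset.mem_Ico.mp hj).1 (Finset.mem_Ico.mp hj).2).2)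
        L hcard (by omega)
      rw [hsum_z] at h
      exact h
    set t : ℝ := 1 - lam * α k / (L:ℝ) with htd
    have ht1 : t ≤ 1 := by
      rw [htd]
      have h0 : 0 ≤ lam * α k / L :=
        div_nonneg (mul_nonneg (by linarith) (le_of_lt (hα0 k))) (le_of_lt hLR)
      linarith
    have ht0' : ((L:ℝ) - lam*Ssum)/L ≤ t := by
      rw [htd]
      have e1 : ((L:ℝ) - lam*Ssum)/L = 1 - lam*Ssum/L := by field_simp
      rw [e1]
      have h1 : lam * α k ≤ lam * Ssum := mul_le_mul_of_nonneg_left hSge (by linarith)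
      have h2 : lam * α k / L ≤ lam * Ssum / L := (div_le_div_iff_of_pos_right hLR).mpr h1
      linarith
    have hbase_nonneg : 0 ≤ ((L:ℝ) - lam*Ssum)/L := le_of_lt (div_pos hsum_pos hLR)
    have ht0 : 0 ≤ t := le_trans hbase_nonneg ht0'
    have hpow : (((L:ℝ) - lam*Ssum)/L)^L ≤ t^L := pow_le_pow_left₀ hbase_nonneg ht0' L
    have hkey : (lam + δ k) * t^L ≤ 1 := by
      have hαk := hα0 k
      have hlam_eq : lam = (1 - t) * (L:ℝ) / α k := by
        rw [htd]; field_simp; ring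
      have h1 : lam * t^L ≤ c k / α k := by
        rw [hlam_eq]
        have h2 : (L:ℝ)*(1-t)*t^L ≤ ((L:ℝ)/((L:ℝ)+1))^(L+1) := core1 L hL1 t ht0 ht1
        have h3 : ((L:ℝ)/((L:ℝ)+1))^(L+1) ≤ ((M k:ℝ)/((M k:ℝ)+1))^(M k+1) :=
          core2_s9 L (M k) hL1 hLM
        calc (1-t)*(L:ℝ)/α k * t^L = ((L:ℝ)*(1-t)*t^L)/α k := by ring
          _ ≤ (((M k:ℝ)/((M k:ℝ)+1))^(M k+1))/α k := (div_le_div_iff_of_pos_right hαk).mpr (le_trans h2 h3)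
          _ = c k / α k := by rw [hc]
      have h4 : δ k * t^L ≤ δ k := by
        have h5 : t^L ≤ 1 := pow_le_one₀ ht0 ht1
        nlinarith [le_of_lt (hδpos k)]
      have h6 : c k / α k + δ k = 1 := by simp only [hδ]; ring
      calc (lam + δ k) * t^L = lam*t^L + δ k*t^L := by ring
        _ ≤ c k/α k + δ k := add_le_add h1 h4
        _ = 1 := h6
    have hxa_pos : 0 < x a := hpos a (by omega)
    have hxn_pos : 0 < x n := hpos n (by omega)
    have hxn : x n ≤ (∏ j ∈ Finset.Ico a n, (1-lam*Q j)) * x a := htel n (by omega) (le_refl n)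
    have hδk := hδpos k
    have hδm_le := hδmin_le k
    calc (lam + δmin) * x n ≤ (lam + δ k) * x n :=
          mul_le_mul_of_nonneg_right (by linarith) (le_of_lt hxn_pos)
      _ ≤ (lam + δ k) * ((∏ j ∈ Finset.Ico a n, (1-lam*Q j)) * x a) :=
          mul_le_mul_of_nonneg_left hxn (by linarith)
      _ ≤ (lam + δ k) * (t^L * x a) := by
          refine mul_le_mul_of_nonneg_left ?_ (by linarith)
          exact mul_le_mul_of_nonneg_right (le_trans hprod_le hpow) (le_of_lt hxa_pos)
      _ = ((lam + δ k) * t^L) * x a := by ring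
      _ ≤ 1 * x a := mul_le_mul_of_nonneg_right hkey (le_of_lt hxa_pos)
      _ = x a := one_mul _
  -- iterate
  have hGood : ∀ r : ℕ, ∃ N' : ℤ, N0 + (Mb:ℤ) ≤ N' ∧
      ∀ i : Fin m, ∀ n : ℤ, N' ≤ n → (1 + (r:ℝ) * δmin) * x n ≤ x (τ i n) := by
    intro r
    induction r with
    | zero =>
      refine ⟨N0 + (Mb:ℤ) + (Mb:ℤ), by omega, ?_⟩
      intro i n hn
      have hn0 : (0:ℤ) ≤ n := by omega
      have hMib : (M i : ℤ) ≤ (Mb : ℤ) := by exact_mod_cast hMble i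
      have hτge : N0 + (Mb:ℤ) ≤ τ i n := by have := hM i n hn0; omega
      have hτle : τ i n ≤ n := by have := hτ i n hn0; omega
      have := hmono (τ i n) n hτge hτle
      simpa using this
    | succ r ih =>
      obtain ⟨N', h1, h2⟩ := ih
      have hr0 : (0:ℝ) ≤ (r:ℝ) * δmin := by positivity
      have hlam1 : 1 ≤ 1 + (r:ℝ)*δmin := by linarith
      refine ⟨max N' N2max + (Mb:ℤ), ?_, ?_⟩
      · have := le_max_left N' N2max; omega
      · intro i n hn
        have h := (hwin (1 + (r:ℝ)*δmin) hlam1 N' h1 h2 i n hn).1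
        have e : (1 + ((r:ℕ)+1:ℝ)*δmin) = (1 + (r:ℝ)*δmin) + δmin := by push_cast; ring
        rw [show ((r+1:ℕ):ℝ) = ((r:ℕ):ℝ) + 1 by push_cast; ring, e]
        exact h
  -- final contradiction
  set k0 : Fin m := ⟨0, hm⟩ with hk0
  obtain ⟨r, hr⟩ := exists_nat_gt ((M k0:ℝ) / (α k0 * δmin))
  obtain ⟨N', h1, h2⟩ := hGood r
  have hr0 : (0:ℝ) ≤ (r:ℝ) * δmin := by positivity
  have hlam1 : 1 ≤ 1 + (r:ℝ)*δmin := by linarith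
  have hcontra := (hwin (1 + (r:ℝ)*δmin) hlam1 N' h1 h2 k0 (max N' N2max + (Mb:ℤ))
    (le_refl _)).2
  have hαpos := hα0 k0
  have h3 : (M k0:ℝ) < (r:ℝ) * (α k0 * δmin) := by
    rw [div_lt_iff₀ (by positivity)] at hr
    linarith
  nlinarith

/-- Theorem 3.3: if each delay is bounded, `n - τ_i(n) ≤ M_i` with `M_i` a positive
integer, and for each `k`, `liminf_{n→∞} ∑_{i=1}^m ∑_{j=τ_k(n)}^{n-1} p_i(j) >
(M_k/(M_k+1))^{M_k+1}`, then every solution of the retarded equation oscillates. -/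
theorem stmt_9 {m : ℕ} (hm : 0 < m) (p : Fin m → ℤ → ℝ) (τ : Fin m → ℤ → ℤ)
    (hp : ∀ i : Fin m, ∀ n : ℤ, 0 ≤ n → 0 ≤ p i n)
    (hτ : ∀ i : Fin m, ∀ n : ℤ, 0 ≤ n → τ i n ≤ n - 1)
    (M : Fin m → ℕ) (hMpos : ∀ i : Fin m, 0 < M i)
    (hM : ∀ i : Fin m, ∀ n : ℤ, 0 ≤ n → n - τ i n ≤ (M i : ℤ))
    (hcond : ∀ k : Fin m,
      ((M k : ℝ) / (M k + 1)) ^ (M k + 1) <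
        Filter.liminf (fun n : ℤ => ∑ i : Fin m, ∑ j ∈ Finset.Ico (τ k n) n, p i j)
          Filter.atTop)
    (x : ℤ → ℝ)
    (hxeq : ∀ n : ℤ, 0 ≤ n → x (n + 1) - x n + ∑ i : Fin m, p i n * x (τ i n) = 0) :
    (¬ ∃ N : ℤ, ∀ n ≥ N, 0 < x n) ∧ (¬ ∃ N : ℤ, ∀ n ≥ N, x n < 0) := by
  constructor
  · rintro ⟨N, hN⟩
    exact no_pos hm p τ hp hτ M hMpos hM hcond x hxeq N fun n hn => hN n hn
  · rintro ⟨N, hN⟩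
    have hyeq : ∀ n : ℤ, 0 ≤ n →
        (fun n => -x n) (n + 1) - (fun n => -x n) n
          + ∑ i : Fin m, p i n * (fun n => -x n) (τ i n) = 0 := by
      intro n hn
      have h := hxeq n hn
      simp only [mul_neg, Finset.sum_neg_distrib]
      linarith
    exact no_pos hm p τ hp hτ M hMpos hM hcond (fun n => -x n) hyeq N
      fun n hn => by simpa using hN n hn
end

section
/- Assume lim_{n→∞} τ_i(n) = ∞ for each 1 ≤ i ≤ m and that for each k = 1, …, m, liminf_{n→∞} Σ_{i=1}^m Σ_{j=τ_k(n)}^{n−1} p_i(j) > 1/e. Then every solution of (E_R) oscillates. -/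
open Filter Finset

lemma zsum_Ico_succ_top {a b : ℤ} (h : a ≤ b) (f : ℤ → ℝ) :
    ∑ j ∈ Finset.Ico a (b+1), f j = (∑ j ∈ Finset.Ico a b, f j) + f b := by
  have : Finset.Ico a (b+1) = insert b (Finset.Ico a b) := by
    ext t; simp only [Finset.mem_Ico, Finset.mem_insert]; omega
  rw [this, Finset.sum_insert (by simp), add_comm]

lemma zsum_Ico_split {a b c : ℤ} (hab : a ≤ b) (hbc : b ≤ c) (f : ℤ → ℝ) :
    ∑ j ∈ Finset.Ico a c, f j = (∑ j ∈ Finset.Ico a b, f j) + ∑ j ∈ Finset.Ico b c, f j := by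
  rw [← Finset.sum_union]
  · congr 1; ext t; simp only [Finset.mem_Ico, Finset.mem_union]; omega
  · rw [Finset.disjoint_left]; intro t ht ht'
    simp only [Finset.mem_Ico] at ht ht'; omega

lemma tele (x g : ℤ → ℝ) (a : ℤ) (h : ∀ j, a ≤ j → x (j+1) ≤ x j - g j) :
    ∀ b, a ≤ b → x b ≤ x a - ∑ j ∈ Finset.Ico a b, g j := by
  refine Int.le_induction (motive := fun b _ => x b ≤ x a - ∑ j ∈ Finset.Ico a b, g j) (by simp) ?_
  intro n hn ih
  rw [zsum_Ico_succ_top hn]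
  have := h n hn
  linarith

lemma prodbound (x q : ℤ → ℝ) (a : ℤ) (h : ∀ j, a ≤ j → x (j+1) ≤ x j * q j)
    (hq : ∀ j, a ≤ j → 0 ≤ q j) :
    ∀ b, a ≤ b → x b ≤ x a * ∏ j ∈ Finset.Ico a b, q j := by
  refine Int.le_induction (motive := fun b _ => x b ≤ x a * ∏ j ∈ Finset.Ico a b, q j) (by simp) ?_
  intro n hn ih
  have hins : Finset.Ico a (n+1) = insert n (Finset.Ico a n) := by
    ext t; simp only [Finset.mem_Ico, Finset.mem_insert]; omega
  rw [hins, Finset.prod_insert (by simp)]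
  calc x (n+1) ≤ x n * q n := h n hn
    _ ≤ (x a * ∏ j ∈ Finset.Ico a n, q j) * q n :=
        mul_le_mul_of_nonneg_right ih (hq n hn)
    _ = x a * (q n * ∏ j ∈ Finset.Ico a n, q j) := by ring

noncomputable def lamseq (c : ℝ) : ℕ → ℝ
  | 0 => 1
  | k+1 => Real.exp (c * lamseq c k)

lemma lamseq_ge_one {c : ℝ} (hc : 0 < c) : ∀ k, 1 ≤ lamseq c k := by
  intro k; induction k with
  | zero => simp [lamseq]
  | succ k ih =>
    have : (0:ℝ) ≤ c * lamseq c k := mul_nonneg hc.le (by linarith)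
    calc (1:ℝ) = Real.exp 0 := by simp
      _ ≤ Real.exp (c * lamseq c k) := Real.exp_le_exp.mpr this
      _ = lamseq c (k+1) := rfl

lemma e_mul_le_exp (z : ℝ) : Real.exp 1 * z ≤ Real.exp z := by
  have h := Real.add_one_le_exp (z - 1)
  have h2 : Real.exp z = Real.exp 1 * Real.exp (z - 1) := by
    rw [← Real.exp_add]; ring_nf
  nlinarith [Real.exp_pos 1]

lemma lamseq_grow {c : ℝ} (hc : 0 < c) : ∀ k, (Real.exp 1 * c)^k ≤ lamseq c k := by
  intro k; induction k with
  | zero => simp [lamseq]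
  | succ k ih =>
    have hec : (0:ℝ) ≤ Real.exp 1 * c := mul_nonneg (Real.exp_pos 1).le hc.le
    calc (Real.exp 1 * c)^(k+1) = (Real.exp 1 * c) * (Real.exp 1 * c)^k := by ring
      _ ≤ (Real.exp 1 * c) * lamseq c k := mul_le_mul_of_nonneg_left ih hec
      _ = Real.exp 1 * (c * lamseq c k) := by ring
      _ ≤ Real.exp (c * lamseq c k) := e_mul_le_exp _
      _ = lamseq c (k+1) := rfl

/-- The core single-delay contradiction lemma. -/
lemma key_s10 (P : ℤ → ℝ) (T : ℤ → ℤ) (x : ℤ → ℝ) (c : ℝ) (Nb : ℤ)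
    (hc : 1 / Real.exp 1 < c)
    (hP : ∀ n, Nb ≤ n → 0 ≤ P n)
    (hTub : ∀ n, Nb ≤ n → T n < n)
    (hTlim : Filter.Tendsto T Filter.atTop Filter.atTop)
    (hsum : ∀ n, Nb ≤ n → c ≤ ∑ j ∈ Finset.Ico (T n) n, P j)
    (hpos : ∀ n, Nb ≤ n → 0 < x n)
    (hineq : ∀ n, Nb ≤ n → x (n+1) ≤ x n - P n * x (T n)) : False := by
  have hc0 : 0 < c := lt_trans (by positivity) hc
  -- threshold extraction from hTlim
  have hth : ∀ (M B : ℤ), ∃ N, B ≤ N ∧ ∀ n, N ≤ n → M ≤ T n := by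
    intro M B
    obtain ⟨N', hN'⟩ := Filter.eventually_atTop.mp (hTlim.eventually_ge_atTop M)
    exact ⟨max N' B, le_max_right _ _, fun n hn => hN' n (le_trans (le_max_left _ _) hn)⟩
  obtain ⟨N₀, hN₀b, hN₀⟩ := hth Nb Nb
  have hstep : ∀ j, N₀ ≤ j → x (j+1) ≤ x j := by
    intro j hj
    have h1 := hineq j (hN₀b.trans hj)
    have h2 : 0 ≤ P j * x (T j) :=
      mul_nonneg (hP j (hN₀b.trans hj)) (le_of_lt (hpos _ (hN₀ j hj)))
    linarith
  have hmono : ∀ a b : ℤ, N₀ ≤ a → a ≤ b → x b ≤ x a := by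
    intro a b ha hab
    refine Int.le_induction (motive := fun b _ => x b ≤ x a) le_rfl ?_ b hab
    intro n hn ih; exact le_trans (hstep n (ha.trans hn)) ih
  -- small-P lemma
  have hPsmall : ∀ (lam : ℝ) (N : ℤ), 0 ≤ lam → N₀ ≤ N →
      (∀ n, N ≤ n → lam * x n ≤ x (T n)) → ∀ j, N ≤ j → lam * P j ≤ 1 := by
    intro lam N hlam hNN hQ j hj
    have hjb : Nb ≤ j := hN₀b.trans (hNN.trans hj)
    have h1 := hineq j hjb
    have h2 := hpos (j+1) (by omega)
    have h3 := hpos j hjb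
    have h4 := hQ j hj
    have h5 := hP j hjb
    have h6 : P j * (lam * x j) ≤ P j * x (T j) := mul_le_mul_of_nonneg_left h4 h5
    nlinarith
  -- Q 1
  have hQ1 : ∃ N, N₀ ≤ N ∧ ∀ n, N ≤ n → lamseq c 0 * x n ≤ x (T n) := by
    obtain ⟨N, hN1, hN2⟩ := hth N₀ N₀
    refine ⟨N, hN1, fun n hn => ?_⟩
    have hnb : Nb ≤ n := by omega
    simp only [lamseq, one_mul]
    exact hmono (T n) n (hN2 n hn) (le_of_lt (hTub n hnb))
  -- Q step
  have hQstep : ∀ lam : ℝ, 1 ≤ lam →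
      (∃ N, N₀ ≤ N ∧ ∀ n, N ≤ n → lam * x n ≤ x (T n)) →
      (∃ N, N₀ ≤ N ∧ ∀ n, N ≤ n → Real.exp (c * lam) * x n ≤ x (T n)) := by
    rintro lam hlam ⟨N₁, hN₁0, hQn⟩
    have hlam0 : (0:ℝ) ≤ lam := le_trans zero_le_one hlam
    have hps := hPsmall lam N₁ hlam0 hN₁0 hQn
    obtain ⟨N₂, hN₂1, hN₂⟩ := hth N₁ N₁
    refine ⟨N₂, hN₁0.trans hN₂1, fun n hn => ?_⟩
    have hnb : Nb ≤ n := by omega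
    have hTn1 : N₁ ≤ T n := hN₂ n hn
    have hTnn : T n ≤ n := le_of_lt (hTub n hnb)
    have hrec : ∀ j, T n ≤ j → x (j+1) ≤ x j * (1 - lam * P j) := by
      intro j hj
      have hj1 : N₁ ≤ j := hTn1.trans hj
      have hjb : Nb ≤ j := by omega
      have h1 := hineq j hjb
      have h4 := hQn j hj1
      have h5 := hP j hjb
      have h6 : P j * (lam * x j) ≤ P j * x (T j) := mul_le_mul_of_nonneg_left h4 h5
      nlinarith
    have hq0 : ∀ j, T n ≤ j → 0 ≤ 1 - lam * P j := by
      intro j hj; have := hps j (hTn1.trans hj); linarith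
    have hpb := prodbound x _ (T n) hrec hq0 n hTnn
    have hprod : (∏ j ∈ Finset.Ico (T n) n, (1 - lam * P j)) ≤ Real.exp (-(lam * c)) := by
      calc (∏ j ∈ Finset.Ico (T n) n, (1 - lam * P j))
          ≤ ∏ j ∈ Finset.Ico (T n) n, Real.exp (-(lam * P j)) := by
            refine Finset.prod_le_prod (fun j hj => hq0 j (Finset.mem_Ico.mp hj).1) ?_
            intro j hj
            have := Real.add_one_le_exp (-(lam * P j)); linarith
        _ = Real.exp (∑ j ∈ Finset.Ico (T n) n, -(lam * P j)) := (Real.exp_sum _ _).symm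
        _ = Real.exp (-(lam * ∑ j ∈ Finset.Ico (T n) n, P j)) := by
            rw [Finset.sum_neg_distrib, Finset.mul_sum]
        _ ≤ Real.exp (-(lam * c)) := by
            refine Real.exp_le_exp.mpr (neg_le_neg ?_)
            exact mul_le_mul_of_nonneg_left (hsum n hnb) hlam0
    have hxTn : 0 < x (T n) := hpos (T n) (by omega)
    calc Real.exp (c * lam) * x n
        ≤ Real.exp (c * lam) * (x (T n) * Real.exp (-(lam * c))) := by
          refine mul_le_mul_of_nonneg_left ?_ (Real.exp_pos _).le
          exact le_trans hpb (mul_le_mul_of_nonneg_left hprod hxTn.le)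
      _ = x (T n) * Real.exp (c * lam + -(lam * c)) := by rw [Real.exp_add]; ring
      _ = x (T n) := by rw [show c * lam + -(lam * c) = 0 by ring, Real.exp_zero, mul_one]
  -- all k
  have hQall : ∀ k : ℕ, ∃ N, N₀ ≤ N ∧ ∀ n, N ≤ n → lamseq c k * x n ≤ x (T n) := by
    intro k; induction k with
    | zero => exact hQ1
    | succ k ih => exact hQstep _ (lamseq_ge_one hc0 k) ih
  -- pick big k
  have hec : 1 < Real.exp 1 * c := by
    rw [div_lt_iff₀ (Real.exp_pos 1)] at hc
    nlinarith
  obtain ⟨k, hk⟩ : ∃ k : ℕ, max (8 / c^2) (4 / c) < lamseq c k := by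
    obtain ⟨k, hk⟩ := Filter.eventually_atTop.mp
      ((tendsto_pow_atTop_atTop_of_one_lt hec).eventually_gt_atTop (max (8/c^2) (4/c)))
    exact ⟨k, lt_of_lt_of_le (hk k le_rfl) (lamseq_grow hc0 k)⟩
  set lam := lamseq c k with hlamdef
  have hlam1 : 1 ≤ lam := lamseq_ge_one hc0 k
  have hlam8 : 8 / c^2 < lam := lt_of_le_of_lt (le_max_left _ _) hk
  have hlam4 : 4 / c ≤ lam := le_of_lt (lt_of_le_of_lt (le_max_right _ _) hk)
  have hlam0 : (0:ℝ) < lam := by linarith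
  have hinvlam : 1 / lam ≤ c / 4 := by
    rw [div_le_div_iff₀ hlam0 (by norm_num : (0:ℝ) < 4)]
    have := (div_le_iff₀ hc0).mp hlam4
    nlinarith
  obtain ⟨N₁, hN₁0, hQn⟩ := hQall k
  have hps : ∀ j, N₁ ≤ j → P j ≤ 1 / lam := by
    intro j hj
    have h := hPsmall lam N₁ (by linarith) hN₁0 hQn j hj
    rw [le_div_iff₀ hlam0]
    linarith [mul_comm lam (P j)]
  obtain ⟨N₂, hN₂1, hN₂⟩ := hth N₁ N₁
  obtain ⟨N₃, hN₃2, hN₃⟩ := hth N₂ N₂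
  -- point s₁ far to the right
  obtain ⟨s₁, hs₁3, hTs₁'⟩ := hth N₃ N₃
  have hTs₁n : N₃ ≤ T s₁ := hTs₁' s₁ le_rfl
  have hs₁b : Nb ≤ s₁ := by omega
  have hs₁gt : N₃ + 1 ≤ s₁ := by have := hTub s₁ hs₁b; omega
  have hsum1 : c ≤ ∑ j ∈ Finset.Ico N₃ s₁, P j := by
    refine le_trans (hsum s₁ hs₁b) (Finset.sum_le_sum_of_subset_of_nonneg ?_ ?_)
    · intro t ht; simp only [Finset.mem_Ico] at *; omega
    · intro j hj _
      simp only [Finset.mem_Ico] at hj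
      exact hP j (by omega)
  -- minimal t'
  set S : Finset ℤ :=
    (Finset.Icc (N₃+1) s₁).filter (fun t => c/4 ≤ ∑ j ∈ Finset.Ico N₃ t, P j) with hS
  have hSne : S.Nonempty := by
    refine ⟨s₁, ?_⟩
    rw [hS, Finset.mem_filter, Finset.mem_Icc]
    exact ⟨⟨hs₁gt, le_rfl⟩, by linarith⟩
  set t' := S.min' hSne with ht'def
  have ht'S : t' ∈ S := S.min'_mem hSne
  rw [hS, Finset.mem_filter, Finset.mem_Icc] at ht'S
  obtain ⟨⟨ht'1, ht'2⟩, ht'sum⟩ := ht'S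
  have hAub : (∑ j ∈ Finset.Ico N₃ t', P j) ≤ c/4 + 1/lam := by
    rcases eq_or_lt_of_le ht'1 with heq | hlt
    · have hA : (∑ j ∈ Finset.Ico N₃ t', P j) = P N₃ := by
        rw [← heq, zsum_Ico_succ_top le_rfl]; simp
      rw [hA]
      have := hps N₃ (by omega)
      linarith
    · have hmm : t' - 1 ∉ S := by
        intro hmem
        have := S.min'_le _ hmem
        rw [← ht'def] at this
        omega
      have hlt2 : (∑ j ∈ Finset.Ico N₃ (t'-1), P j) < c/4 := by
        by_contra hcon
        push_neg at hcon
        exact hmm (by rw [hS, Finset.mem_filter, Finset.mem_Icc]; exact ⟨⟨by omega, by omega⟩, hcon⟩)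
      have hsplit : (∑ j ∈ Finset.Ico N₃ t', P j)
          = (∑ j ∈ Finset.Ico N₃ (t'-1), P j) + P (t'-1) := by
        have h := zsum_Ico_succ_top (show N₃ ≤ t'-1 by omega) P
        rw [show t'-1+1 = t' by ring] at h
        exact h
      have hp1 := hps (t'-1) (by omega)
      linarith
  -- argmax s₃ over [N₃, t']
  obtain ⟨s₃, hs₃mem, hs₃max⟩ := Finset.exists_max_image (Finset.Icc N₃ t') T
    ⟨N₃, by rw [Finset.mem_Icc]; omega⟩
  rw [Finset.mem_Icc] at hs₃mem
  have hTs₃2 : N₂ ≤ T s₃ :=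
    le_trans (hN₃ N₃ le_rfl) (hs₃max N₃ (by rw [Finset.mem_Icc]; omega))
  have hTs₃n : T s₃ ≤ N₃ := by
    by_contra hcon
    push_neg at hcon
    have hs₃b : Nb ≤ s₃ := by omega
    have h1 : T s₃ < s₃ := hTub s₃ hs₃b
    have h2 : c ≤ ∑ j ∈ Finset.Ico N₃ t', P j := by
      refine le_trans (hsum s₃ hs₃b) (Finset.sum_le_sum_of_subset_of_nonneg ?_ ?_)
      · intro t ht; rw [Finset.mem_Ico] at *; omega
      · intro j hj _; rw [Finset.mem_Ico] at hj; exact hP j (by omega)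
    linarith
  -- estimate (ii)
  have htel1 := tele x (fun j => P j * x (T j)) N₃ (fun j hj => hineq j (by omega)) t' (by omega)
  have hterm1 : (c/4) * x (T s₃) ≤ ∑ j ∈ Finset.Ico N₃ t', P j * x (T j) := by
    have h1 : ∀ j ∈ Finset.Ico N₃ t', P j * x (T s₃) ≤ P j * x (T j) := by
      intro j hj
      rw [Finset.mem_Ico] at hj
      refine mul_le_mul_of_nonneg_left ?_ (hP j (by omega))
      refine hmono (T j) (T s₃) ?_ (hs₃max j (by rw [Finset.mem_Icc]; omega))
      have := hN₃ j hj.1; omega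
    calc (c/4) * x (T s₃)
        ≤ (∑ j ∈ Finset.Ico N₃ t', P j) * x (T s₃) :=
          mul_le_mul_of_nonneg_right ht'sum (hpos (T s₃) (by omega)).le
      _ = ∑ j ∈ Finset.Ico N₃ t', P j * x (T s₃) := by rw [Finset.sum_mul]
      _ ≤ _ := Finset.sum_le_sum h1
  have hii : (c/4) * x (T s₃) ≤ x N₃ := by
    have hxpos := hpos t' (by omega)
    linarith
  -- estimate (iii)
  have hiii : c/2 ≤ ∑ j ∈ Finset.Ico (T s₃) N₃, P j := by
    have hs₃b : Nb ≤ s₃ := by omega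
    have hcs₃ := hsum s₃ hs₃b
    rcases le_or_gt s₃ N₃ with hle | hgt
    · have h2 : (∑ j ∈ Finset.Ico (T s₃) s₃, P j) ≤ ∑ j ∈ Finset.Ico (T s₃) N₃, P j := by
        refine Finset.sum_le_sum_of_subset_of_nonneg ?_ ?_
        · intro t ht; rw [Finset.mem_Ico] at *; omega
        · intro j hj _; rw [Finset.mem_Ico] at hj; exact hP j (by omega)
      linarith
    · have hsplit := zsum_Ico_split hTs₃n hgt.le P
      have hB : (∑ j ∈ Finset.Ico N₃ s₃, P j) ≤ ∑ j ∈ Finset.Ico N₃ t', P j := by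
        refine Finset.sum_le_sum_of_subset_of_nonneg ?_ ?_
        · intro t ht; rw [Finset.mem_Ico] at *; omega
        · intro j hj _; rw [Finset.mem_Ico] at hj; exact hP j (by omega)
      linarith
  -- argmax s₂ over [N₂, N₃]
  obtain ⟨s₂, hs₂mem, hs₂max⟩ := Finset.exists_max_image (Finset.Icc N₂ N₃) T
    ⟨N₂, by rw [Finset.mem_Icc]; omega⟩
  rw [Finset.mem_Icc] at hs₂mem
  have hTs₂1 : N₁ ≤ T s₂ := hN₂ s₂ hs₂mem.1
  -- estimate (iv)
  have htel2 := tele x (fun j => P j * x (T j)) (T s₃)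
    (fun j hj => hineq j (by omega)) N₃ hTs₃n
  have hterm2 : (c/2) * x (T s₂) ≤ ∑ j ∈ Finset.Ico (T s₃) N₃, P j * x (T j) := by
    have h1 : ∀ j ∈ Finset.Ico (T s₃) N₃, P j * x (T s₂) ≤ P j * x (T j) := by
      intro j hj
      rw [Finset.mem_Ico] at hj
      have hj2 : N₂ ≤ j := le_trans hTs₃2 hj.1
      refine mul_le_mul_of_nonneg_left ?_ (hP j (by omega))
      refine hmono (T j) (T s₂) ?_ (hs₂max j (by rw [Finset.mem_Icc]; omega))
      have := hN₂ j hj2; omega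
    calc (c/2) * x (T s₂)
        ≤ (∑ j ∈ Finset.Ico (T s₃) N₃, P j) * x (T s₂) :=
          mul_le_mul_of_nonneg_right hiii (hpos (T s₂) (by omega)).le
      _ = ∑ j ∈ Finset.Ico (T s₃) N₃, P j * x (T s₂) := by rw [Finset.sum_mul]
      _ ≤ _ := Finset.sum_le_sum h1
  have hiv : (c/2) * x (T s₂) ≤ x (T s₃) := by
    have := hpos N₃ (by omega)
    linarith
  -- estimate (v)
  have hv : lam * x N₃ ≤ x (T s₂) := by
    have h1 := hQn s₂ (le_trans hN₂1 hs₂mem.1)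
    have h2 : x N₃ ≤ x s₂ := hmono s₂ N₃ (by omega) hs₂mem.2
    calc lam * x N₃ ≤ lam * x s₂ := mul_le_mul_of_nonneg_left h2 (by linarith)
      _ ≤ x (T s₂) := h1
  -- final contradiction
  have hxn := hpos N₃ (by omega)
  have h1 : (c/4) * ((c/2) * x (T s₂)) ≤ (c/4) * x (T s₃) :=
    mul_le_mul_of_nonneg_left hiv (by linarith)
  have h2 : (c/4) * ((c/2) * (lam * x N₃)) ≤ (c/4) * ((c/2) * x (T s₂)) :=
    mul_le_mul_of_nonneg_left (mul_le_mul_of_nonneg_left hv (by linarith)) (by linarith)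
  have h4 : 8 < lam * c^2 := (div_lt_iff₀ (by positivity)).mp hlam8
  nlinarith [hii, h1, h2, hxn, h4]

lemma noEP {m : ℕ} (hm : 0 < m) (p : Fin m → ℤ → ℝ) (τ : Fin m → ℤ → ℤ)
    (hp : ∀ i : Fin m, ∀ n : ℤ, 0 ≤ n → 0 ≤ p i n)
    (hτ : ∀ i : Fin m, ∀ n : ℤ, 0 ≤ n → τ i n ≤ n - 1)
    (hτlim : ∀ i : Fin m, Filter.Tendsto (τ i) Filter.atTop Filter.atTop)
    (hcond : ∀ k : Fin m,
      1 / Real.exp 1 <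
        Filter.liminf (fun n : ℤ => ∑ i : Fin m, ∑ j ∈ Finset.Ico (τ k n) n, p i j)
          Filter.atTop)
    (x : ℤ → ℝ)
    (hxeq : ∀ n : ℤ, 0 ≤ n → x (n + 1) - x n + ∑ i : Fin m, p i n * x (τ i n) = 0)
    (N : ℤ) (hx : ∀ n, N ≤ n → 0 < x n) : False := by
  haveI : Nonempty (Fin m) := Fin.pos_iff_nonempty.mp hm
  set i₀ : Fin m := ⟨0, hm⟩ with hi₀
  set P : ℤ → ℝ := fun n => ∑ i : Fin m, p i n with hPdef
  set T : ℤ → ℤ := fun n => Finset.univ.sup' Finset.univ_nonempty (fun i => τ i n) with hTdef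
  have hTle : ∀ i n, τ i n ≤ T n := by
    intro i n
    rw [hTdef]
    exact Finset.le_sup' (fun i => τ i n) (Finset.mem_univ i)
  have hTex : ∀ n, ∃ i : Fin m, T n = τ i n := by
    intro n
    rw [hTdef]
    obtain ⟨i, _, hi⟩ := Finset.exists_mem_eq_sup' (Finset.univ_nonempty) (fun i => τ i n)
    exact ⟨i, hi⟩
  have hTlim : Filter.Tendsto T Filter.atTop Filter.atTop :=
    tendsto_atTop_mono (fun n => hTle i₀ n) (hτlim i₀)
  -- the sequences from the liminf condition
  set f : Fin m → ℤ → ℝ := fun k n => ∑ i : Fin m, ∑ j ∈ Finset.Ico (τ k n) n, p i j with hfdef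
  set c : ℝ := Finset.univ.inf' Finset.univ_nonempty
      (fun k => (1/Real.exp 1 + Filter.liminf (f k) Filter.atTop)/2) with hcdef
  have hc : 1 / Real.exp 1 < c := by
    rw [hcdef, Finset.lt_inf'_iff]
    intro k _
    have := hcond k
    linarith
  have hev : ∀ k : Fin m, ∀ᶠ n in Filter.atTop, c ≤ f k n := by
    intro k
    have hbd : Filter.IsBoundedUnder (· ≥ ·) Filter.atTop (f k) := by
      refine ⟨0, ?_⟩
      rw [Filter.eventually_map]
      filter_upwards [(hτlim k).eventually_ge_atTop 0] with n hn
      exact Finset.sum_nonneg fun i _ => Finset.sum_nonneg fun j hj =>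
        hp i j (le_trans hn (Finset.mem_Ico.mp hj).1)
    have hlt : (1/Real.exp 1 + Filter.liminf (f k) Filter.atTop)/2
        < Filter.liminf (f k) Filter.atTop := by
      have := hcond k; linarith
    have hevk := Filter.eventually_lt_of_lt_liminf hlt hbd
    filter_upwards [hevk] with n hn
    refine le_trans ?_ hn.le
    rw [hcdef]
    exact Finset.inf'_le _ (Finset.mem_univ k)
  -- thresholds
  set M₀ : ℤ := max N 0 with hM₀
  obtain ⟨M₁', hM₁'⟩ := Filter.eventually_atTop.mp
    (Filter.eventually_all.mpr (fun i => (hτlim i).eventually_ge_atTop M₀))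
  set M₁ : ℤ := max M₁' M₀ with hM₁
  obtain ⟨M₂', hM₂'⟩ := Filter.eventually_atTop.mp
    (Filter.eventually_all.mpr (fun i => (hτlim i).eventually_ge_atTop M₁))
  obtain ⟨M₃', hM₃'⟩ := Filter.eventually_atTop.mp (Filter.eventually_all.mpr hev)
  set Nb : ℤ := max (max M₂' M₃') M₁ with hNb
  have hNb0 : (0:ℤ) ≤ Nb := by
    have : (0:ℤ) ≤ M₀ := le_max_right _ _
    have : M₀ ≤ M₁ := le_max_right _ _
    omega
  have hA : ∀ n, Nb ≤ n → ∀ i, M₁ ≤ τ i n := fun n hn => hM₂' n (by omega)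
  have hB : ∀ n, Nb ≤ n → ∀ k, c ≤ f k n := fun n hn => hM₃' n (by omega)
  -- monotonicity of x on [M₁, ∞)
  have hM₁0 : (0:ℤ) ≤ M₁ := by
    have : (0:ℤ) ≤ M₀ := le_max_right _ _
    omega
  have hM₀N : N ≤ M₀ := le_max_left _ _
  have hstep : ∀ j, M₁ ≤ j → x (j+1) ≤ x j := by
    intro j hj
    have hj0 : (0:ℤ) ≤ j := by omega
    have heq := hxeq j hj0
    have hterm : 0 ≤ ∑ i : Fin m, p i j * x (τ i j) := by
      refine Finset.sum_nonneg fun i _ => mul_nonneg (hp i j hj0) ?_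
      have hτi : M₀ ≤ τ i j := hM₁' j (by omega) i
      exact (hx (τ i j) (by omega)).le
    linarith
  have hmono : ∀ a b : ℤ, M₁ ≤ a → a ≤ b → x b ≤ x a := by
    intro a b ha hab
    refine Int.le_induction (motive := fun b _ => x b ≤ x a) le_rfl ?_ b hab
    intro n hn ih; exact le_trans (hstep n (ha.trans hn)) ih
  -- feed the key lemma
  refine key_s10 P T x c Nb hc ?_ ?_ hTlim ?_ ?_ ?_
  · intro n hn
    exact Finset.sum_nonneg fun i _ => hp i n (by omega)
  · intro n hn
    obtain ⟨i, hi⟩ := hTex n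
    have := hτ i n (by omega)
    omega
  · intro n hn
    obtain ⟨k, hk⟩ := hTex n
    have hswap : (∑ j ∈ Finset.Ico (T n) n, P j) = f k n := by
      rw [hk, hfdef, hPdef]
      exact Finset.sum_comm
    rw [hswap]
    exact hB n hn k
  · intro n hn
    have : M₀ ≤ n := by
      have : M₀ ≤ M₁ := le_max_right _ _
      omega
    exact hx n (by omega)
  · intro n hn
    have hn0 : (0:ℤ) ≤ n := by omega
    have heq := hxeq n hn0
    have hcmp : ∑ i : Fin m, p i n * x (T n) ≤ ∑ i : Fin m, p i n * x (τ i n) := by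
      refine Finset.sum_le_sum fun i _ => mul_le_mul_of_nonneg_left ?_ (hp i n hn0)
      exact hmono (τ i n) (T n) (hA n hn i) (hTle i n)
    have hsm : ∑ i : Fin m, p i n * x (T n) = P n * x (T n) := by
      rw [hPdef, Finset.sum_mul]
    linarith

/-- Theorem 3.4: if `τ_i(n) → ∞` and for each `k`,
`liminf_{n→∞} ∑_{i=1}^m ∑_{j=τ_k(n)}^{n-1} p_i(j) > 1/e`,
then every solution of the retarded equation oscillates. -/
theorem stmt_10 {m : ℕ} (hm : 0 < m) (p : Fin m → ℤ → ℝ) (τ : Fin m → ℤ → ℤ)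
    (hp : ∀ i : Fin m, ∀ n : ℤ, 0 ≤ n → 0 ≤ p i n)
    (hτ : ∀ i : Fin m, ∀ n : ℤ, 0 ≤ n → τ i n ≤ n - 1)
    (hτlim : ∀ i : Fin m, Filter.Tendsto (τ i) Filter.atTop Filter.atTop)
    (hcond : ∀ k : Fin m,
      1 / Real.exp 1 <
        Filter.liminf (fun n : ℤ => ∑ i : Fin m, ∑ j ∈ Finset.Ico (τ k n) n, p i j)
          Filter.atTop)
    (x : ℤ → ℝ)
    (hxeq : ∀ n : ℤ, 0 ≤ n → x (n + 1) - x n + ∑ i : Fin m, p i n * x (τ i n) = 0) :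
    (¬ ∃ N : ℤ, ∀ n ≥ N, 0 < x n) ∧ (¬ ∃ N : ℤ, ∀ n ≥ N, x n < 0) := by
  constructor
  · rintro ⟨N, hN⟩
    exact noEP hm p τ hp hτ hτlim hcond x hxeq N (fun n hn => hN n hn)
  · rintro ⟨N, hN⟩
    refine noEP hm p τ hp hτ hτlim hcond (fun n => -x n) ?_ N
      (fun n hn => by simpa using hN n hn)
    intro n hn
    have h := hxeq n hn
    show -x (n + 1) - -x n + ∑ i : Fin m, p i n * -x (τ i n) = 0
    have h2 : ∑ i : Fin m, p i n * -x (τ i n) = -∑ i : Fin m, p i n * x (τ i n) := by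
      simp [mul_neg]
    rw [h2]
    linarith
end
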